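/- arXiv:2410.23034 — 7 statements merged into one kernel-verified Lean document; each statement's English description precedes it below -/
import Mathlib

section
/- Let k ≥ 2 be an integer and let G = BS(1,k) = ℤ[1/k] ⋊_φ ℤ. Then there exists a sequence (F_n) of nonempty finite subsets of G such that: (i) for every x ∈ G, |F_n·x △ F_n|/|F_n| → 0 as n → ∞ (i.e. (F_n) is a right Følner sequence); and (ii) c(F_n) = |F_n| for every n, so in particular the conjugacy ratio limsup_{n→∞} c(F_n)/|F_n| equals 1. -/
noncomputable section

/-- `ℤ[1/k]`: the additive subgroup `{a/kⁱ : a ∈ ℤ, i ∈ ℕ}` of `ℚ`. -/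
def zOneOver (k : ℕ) : AddSubgroup ℚ :=
  AddSubgroup.closure {x : ℚ | ∃ (a : ℤ) (i : ℕ), x = (a : ℚ) / (k : ℚ) ^ i}

lemma intCast_mem_zOneOver (k : ℕ) (a : ℤ) : (a : ℚ) ∈ zOneOver k :=
  AddSubgroup.subset_closure ⟨a, 0, by simp⟩

/-- Multiplication by `k` as an additive automorphism of `ℚ`. -/
def mulQ (k : ℕ) (hk : 2 ≤ k) : AddAut ℚ where
  toFun x := (k : ℚ) * x
  invFun x := ((k : ℚ))⁻¹ * x
  left_inv x := by
    have hk0 : (k : ℚ) ≠ 0 := by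
      have : 0 < k := by omega
      exact_mod_cast this.ne'
    field_simp
  right_inv x := by
    have hk0 : (k : ℚ) ≠ 0 := by
      have : 0 < k := by omega
      exact_mod_cast this.ne'
    field_simp
  map_add' x y := by ring

/-- The action of the generator `t` of `ℤ` on `ℚ` (written multiplicatively). -/
def bsAut (k : ℕ) (hk : 2 ≤ k) : MulAut (Multiplicative ℚ) :=
  AddEquiv.toMultiplicative (mulQ k hk)

lemma bsAut_apply (k : ℕ) (hk : 2 ≤ k) (y : Multiplicative ℚ) :
    Multiplicative.toAdd (bsAut k hk y) = (k : ℚ) * Multiplicative.toAdd y := rfl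

lemma bsAut_inv_apply (k : ℕ) (hk : 2 ≤ k) (y : Multiplicative ℚ) :
    Multiplicative.toAdd ((bsAut k hk)⁻¹ y) = ((k : ℚ))⁻¹ * Multiplicative.toAdd y := rfl

lemma bsAut_zpow (k : ℕ) (hk : 2 ≤ k) (n : ℤ) :
    ∀ y : Multiplicative ℚ,
      Multiplicative.toAdd ((bsAut k hk ^ n) y) = (k : ℚ) ^ n * Multiplicative.toAdd y := by
  have hk0 : (k : ℚ) ≠ 0 := by
    have : 0 < k := by omega
    exact_mod_cast this.ne'
  induction n using Int.induction_on with
  | zero => intro y; simp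
  | succ m ih =>
      intro y
      rw [zpow_add_one, MulAut.mul_apply, ih, bsAut_apply, zpow_add_one₀ hk0]
      ring
  | pred m ih =>
      intro y
      rw [zpow_sub_one, MulAut.mul_apply, ih, bsAut_inv_apply, zpow_sub_one₀ hk0]
      ring

lemma zOneOver_smul (k : ℕ) (hk : 2 ≤ k) (n : ℤ) {x : ℚ} (hx : x ∈ zOneOver k) :
    (k : ℚ) ^ n * x ∈ zOneOver k := by
  have hk0 : (k : ℚ) ≠ 0 := by
    have : 0 < k := by omega
    exact_mod_cast this.ne'
  induction hx using AddSubgroup.closure_induction with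
  | mem x hx =>
      obtain ⟨a, i, rfl⟩ := hx
      apply AddSubgroup.subset_closure
      rcases le_or_gt (i : ℤ) n with h | h
      · refine ⟨a * k ^ (n - i).toNat, 0, ?_⟩
        have h1 : ((n - i).toNat : ℤ) = n - i := Int.toNat_of_nonneg (by omega)
        push_cast
        rw [← zpow_natCast (k : ℚ) (n - i).toNat]
        rw [h1]
        rw [zpow_sub₀ hk0]
        field_simp
        simp only [zpow_natCast]
        try ring
      · refine ⟨a, (i - n).toNat, ?_⟩
        have h1 : (((i : ℤ) - n).toNat : ℤ) = (i : ℤ) - n := Int.toNat_of_nonneg (by omega)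
        rw [← zpow_natCast (k : ℚ) i, ← zpow_natCast (k : ℚ) ((i : ℤ) - n).toNat, h1,
          zpow_sub₀ hk0]
        field_simp
  | zero => simpa using (zOneOver k).zero_mem
  | add x y hx hy ihx ihy =>
      rw [mul_add]
      exact add_mem ihx ihy
  | neg x hx ihx =>
      rw [mul_neg]
      exact neg_mem ihx

/-- The ambient group `ℚ ⋊_φ ℤ`, in which `BS(1,k) = ℤ[1/k] ⋊_φ ℤ` sits. -/
abbrev BSAmbient (k : ℕ) (hk : 2 ≤ k) :=
  Multiplicative ℚ ⋊[zpowersHom (MulAut (Multiplicative ℚ)) (bsAut k hk)] Multiplicative ℤ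

/-- The Baumslag–Solitar group `BS(1,k) = ℤ[1/k] ⋊_φ ℤ`, realised as the subgroup of
`ℚ ⋊_φ ℤ` of elements whose first coordinate lies in `ℤ[1/k]`. -/
def BS (k : ℕ) (hk : 2 ≤ k) : Subgroup (BSAmbient k hk) where
  carrier := {g | Multiplicative.toAdd g.left ∈ zOneOver k}
  one_mem' := by
    simpa using (zOneOver k).zero_mem
  mul_mem' := by
    intro a b ha hb
    simp only [Set.mem_setOf_eq, SemidirectProduct.mul_left, toAdd_mul] at *
    refine add_mem ha ?_
    rw [zpowersHom_apply, bsAut_zpow]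
    exact zOneOver_smul k hk _ hb
  inv_mem' := by
    intro a ha
    simp only [Set.mem_setOf_eq, SemidirectProduct.inv_left, zpowersHom_apply, toAdd_inv] at *
    rw [bsAut_zpow, toAdd_inv, mul_neg]
    exact neg_mem (zOneOver_smul k hk _ ha)

/-- The element `(x, tⁿ)` of `BS(1,k)`, for `x ∈ ℤ[1/k]` and `n ∈ ℤ`. -/
def bsElem (k : ℕ) (hk : 2 ≤ k) (x : ℚ) (hx : x ∈ zOneOver k) (n : ℤ) : ↥(BS k hk) :=
  ⟨⟨Multiplicative.ofAdd x, Multiplicative.ofAdd n⟩, hx⟩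


namespace BSAux

-- aux

lemma natCast_mem_zOneOver (k a : ℕ) : ((a : ℚ) ∈ zOneOver k) := by
  have := intCast_mem_zOneOver k (a : ℤ); simpa using this

lemma zOneOver_exists_rep (k : ℕ) (hk : 2 ≤ k) {x : ℚ} (hx : x ∈ zOneOver k) :
    ∃ (b : ℤ) (v : ℕ), x = (b : ℚ) / (k : ℚ) ^ v := by
  have hk0 : (k : ℚ) ≠ 0 := by
    have : 0 < k := by omega
    exact_mod_cast this.ne'
  induction hx using AddSubgroup.closure_induction with
  | mem x hx => exact hx
  | zero => exact ⟨0, 0, by simp⟩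
  | add x y hx hy ihx ihy =>
      obtain ⟨a, i, rfl⟩ := ihx
      obtain ⟨b, jj, rfl⟩ := ihy
      refine ⟨a * k ^ jj + b * k ^ i, i + jj, ?_⟩
      have h : ((a * k ^ jj + b * k ^ i : ℤ) : ℚ) / (k:ℚ)^(i+jj)
          = (a:ℚ) / (k:ℚ)^i + (b:ℚ) / (k:ℚ)^jj := by
        push_cast
        rw [pow_add, div_add_div _ _ (pow_ne_zero i hk0) (pow_ne_zero jj hk0)]
        ring_nf
      exact h.symm
  | neg x hx ih =>
      obtain ⟨a, i, rfl⟩ := ih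
      exact ⟨-a, i, by push_cast; field_simp⟩

-- Lemma B

lemma lemB (k : ℕ) (hk : 2 ≤ k) {q N m r r' : ℕ} (hq : 1 ≤ q) (hm : 1 ≤ m)
    (hmN : m + q < N) (hr : r < k ^ q) (hr' : r' < k ^ q) :
    (0 : ℤ) < (k:ℤ) ^ m * ((k:ℤ) ^ q + r) - ((k:ℤ) ^ q + r') ∧
    (k:ℤ) ^ m * ((k:ℤ) ^ q + r) - ((k:ℤ) ^ q + r') < (k:ℤ) ^ N - 1 := by
  have hK : (2:ℤ) ≤ (k:ℤ) := by exact_mod_cast hk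
  have hK1 : (1:ℤ) ≤ (k:ℤ) := by linarith
  have hKm : (k:ℤ) ≤ (k:ℤ) ^ m := le_self_pow₀ hK1 (by omega)
  have hrz : (0:ℤ) ≤ (r:ℤ) := Int.natCast_nonneg r
  have hr'z : (r':ℤ) < (k:ℤ) ^ q := by exact_mod_cast hr'
  have hrz2 : (r:ℤ) < (k:ℤ) ^ q := by exact_mod_cast hr
  have hq0 : (0:ℤ) < (k:ℤ) ^ q := by positivity
  constructor
  · nlinarith [hq0]
  · -- upper bound
    have h1 : (k:ℤ) ^ m * ((k:ℤ) ^ q + r) < 2 * (k:ℤ) ^ (m + q) := by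
      have : ((k:ℤ) ^ q + r) < 2 * (k:ℤ) ^ q := by linarith
      have hp : (0:ℤ) < (k:ℤ) ^ m := by positivity
      calc (k:ℤ) ^ m * ((k:ℤ) ^ q + r) < (k:ℤ) ^ m * (2 * (k:ℤ) ^ q) := by
            exact mul_lt_mul_of_pos_left this hp
        _ = 2 * (k:ℤ) ^ (m + q) := by rw [pow_add]; ring
    have h2 : 2 * (k:ℤ) ^ (m + q) ≤ (k:ℤ) ^ N := by
      have hN1 : m + q ≤ N - 1 := by omega
      have : (k:ℤ) ^ (m+q) ≤ (k:ℤ) ^ (N-1) := pow_le_pow_right₀ hK1 hN1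
      have hNe : (k:ℤ) ^ N = (k:ℤ) ^ (N-1) * (k:ℤ) := by
        rw [← pow_succ]; congr 1; omega
      nlinarith [pow_pos (by linarith : (0:ℤ) < (k:ℤ)) (N-1)]
    have hq2 : (2:ℤ) ≤ (k:ℤ) ^ q := by
      calc (2:ℤ) ≤ (k:ℤ) := hK
        _ = (k:ℤ)^1 := (pow_one _).symm
        _ ≤ (k:ℤ)^q := pow_le_pow_right₀ hK1 hq
    linarith

-- Lemma E
lemma lemE (k : ℕ) (hk : 2 ≤ k) {q N : ℕ} (hq : 1 ≤ q) (hN : 2 * q < N)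
    {r r' : ℕ} (hr : r < k ^ q) (hr' : r' < k ^ q) {m : ℕ} (hm : m < N)
    (hdvd : ((k:ℤ) ^ N - 1) ∣ (k:ℤ) ^ m * ((k:ℤ) ^ q + r) - ((k:ℤ) ^ q + r')) : r = r' := by
  have hK : (2:ℤ) ≤ (k:ℤ) := by exact_mod_cast hk
  have hK1 : (1:ℤ) ≤ (k:ℤ) := by linarith
  have hq2 : (2:ℤ) ≤ (k:ℤ) ^ q := by
    calc (2:ℤ) ≤ (k:ℤ) := hK
      _ = (k:ℤ)^1 := (pow_one _).symm
      _ ≤ (k:ℤ)^q := pow_le_pow_right₀ hK1 hq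
  have hD : (k:ℤ) ^ q < (k:ℤ) ^ N - 1 := by
    have h1 : (k:ℤ) ^ (q+1) ≤ (k:ℤ) ^ N := pow_le_pow_right₀ hK1 (by omega)
    have h2 : (k:ℤ) ^ q * 2 ≤ (k:ℤ) ^ (q+1) := by
      rw [pow_succ]
      nlinarith [pow_pos (by linarith : (0:ℤ) < (k:ℤ)) q]
    linarith
  rcases Nat.eq_zero_or_pos m with h0 | hm1
  · subst h0
    simp only [pow_zero, one_mul] at hdvd
    have h := Int.eq_zero_of_abs_lt_dvd hdvd ?_
    · have : (r:ℤ) = r' := by linarith [sub_eq_zero.mp h]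
      exact_mod_cast this
    · have hrz : (r:ℤ) < (k:ℤ) ^ q := by exact_mod_cast hr
      have hr'z : (r':ℤ) < (k:ℤ) ^ q := by exact_mod_cast hr'
      have hrz0 : (0:ℤ) ≤ (r:ℤ) := Int.natCast_nonneg r
      have hr'z0 : (0:ℤ) ≤ (r':ℤ) := Int.natCast_nonneg r'
      rw [abs_sub_lt_iff]
      constructor <;> linarith
  · rcases lt_or_ge (m + q) N with hcase | hcase
    · exfalso
      obtain ⟨hpos, hlt⟩ := lemB k hk hq hm1 hcase hr hr'
      have := Int.eq_zero_of_abs_lt_dvd hdvd (by rw [abs_of_pos hpos]; exact hlt)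
      exact hpos.ne' this
    · -- m + q ≥ N : transfer to m₂ = N - m ≤ q
      exfalso
      set m₂ := N - m with hm₂
      have hm₂1 : 1 ≤ m₂ := by omega
      have hm₂q : m₂ ≤ q := by omega
      have hdvd2 : ((k:ℤ) ^ N - 1) ∣ (k:ℤ) ^ m₂ * ((k:ℤ) ^ q + r') - ((k:ℤ) ^ q + r) := by
        have h1 : ((k:ℤ) ^ N - 1) ∣ (k:ℤ) ^ m₂ * ((k:ℤ) ^ m * ((k:ℤ) ^ q + r) - ((k:ℤ) ^ q + r')) :=
          hdvd.mul_left _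
        have hpow : (k:ℤ) ^ m₂ * (k:ℤ) ^ m = (k:ℤ) ^ N := by
          rw [← pow_add]; congr 1; omega
        have h2 : (k:ℤ) ^ m₂ * ((k:ℤ) ^ m * ((k:ℤ) ^ q + r) - ((k:ℤ) ^ q + r'))
            = (k:ℤ) ^ N * ((k:ℤ) ^ q + r) - (k:ℤ) ^ m₂ * ((k:ℤ) ^ q + r') := by
          rw [mul_sub, ← mul_assoc, hpow]
        rw [h2] at h1
        have h3 : ((k:ℤ) ^ N - 1) ∣ ((k:ℤ) ^ N - 1) * ((k:ℤ) ^ q + r) := Dvd.intro _ rfl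
        have h4 := dvd_sub h1 h3
        have h5 : (k:ℤ) ^ N * ((k:ℤ) ^ q + r) - (k:ℤ) ^ m₂ * ((k:ℤ) ^ q + r')
            - ((k:ℤ) ^ N - 1) * ((k:ℤ) ^ q + r)
            = -((k:ℤ) ^ m₂ * ((k:ℤ) ^ q + r') - ((k:ℤ) ^ q + r)) := by ring
        rw [h5] at h4
        exact (dvd_neg.mp h4)
      obtain ⟨hpos, hlt⟩ := lemB k hk (N := N) hq hm₂1 (by omega) hr' hr
      have := Int.eq_zero_of_abs_lt_dvd hdvd2 (by rw [abs_of_pos hpos]; exact hlt)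
      exact hpos.ne' this

-- coprimality
lemma copr (k : ℕ) (hk : 2 ≤ k) {N : ℕ} (hN : 1 ≤ N) :
    IsCoprime ((k:ℤ)) ((k:ℤ) ^ N - 1) := by
  refine ⟨(k:ℤ) ^ (N-1), -1, ?_⟩
  have : (k:ℤ) ^ (N-1) * (k:ℤ) = (k:ℤ) ^ N := by
    rw [← pow_succ]; congr 1; omega
  rw [this]; ring

-- Lemma C : exponent reduction
lemma lemC (k : ℕ) (hk : 2 ≤ k) {N : ℕ} (hN : 1 ≤ N) {u u' : ℤ} {α β : ℕ}
    (h : ((k:ℤ) ^ N - 1) ∣ (k:ℤ) ^ α * u - (k:ℤ) ^ β * u') :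
    ∃ m < N, (((k:ℤ) ^ N - 1) ∣ (k:ℤ) ^ m * u - u') ∨ (((k:ℤ) ^ N - 1) ∣ (k:ℤ) ^ m * u' - u) := by
  set D := (k:ℤ) ^ N - 1 with hD
  have hred : ∀ γ : ℕ, D ∣ (k:ℤ) ^ γ - (k:ℤ) ^ (γ % N) := by
    intro γ
    have h1 : (k:ℤ) ^ γ = ((k:ℤ) ^ N) ^ (γ / N) * (k:ℤ) ^ (γ % N) := by
      rw [← pow_mul, ← pow_add]
      congr 1
      exact (Nat.div_add_mod γ N).symm
    have h2 : D ∣ ((k:ℤ) ^ N) ^ (γ / N) - 1 := by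
      have := sub_dvd_pow_sub_pow ((k:ℤ) ^ N) 1 (γ / N)
      simpa using this
    have h3 : (k:ℤ) ^ γ - (k:ℤ) ^ (γ % N) = (((k:ℤ) ^ N) ^ (γ / N) - 1) * (k:ℤ) ^ (γ % N) := by
      rw [h1]; ring
    rw [h3]
    exact h2.mul_right _
  have h' : D ∣ (k:ℤ) ^ (α % N) * u - (k:ℤ) ^ (β % N) * u' := by
    have h1 := dvd_sub h (dvd_sub ((hred α).mul_right u) ((hred β).mul_right u'))
    have h2 : (k:ℤ) ^ α * u - (k:ℤ) ^ β * u'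
        - (((k:ℤ) ^ α - (k:ℤ) ^ (α % N)) * u - ((k:ℤ) ^ β - (k:ℤ) ^ (β % N)) * u')
        = (k:ℤ) ^ (α % N) * u - (k:ℤ) ^ (β % N) * u' := by ring
    rwa [h2] at h1
  have hcop : ∀ t : ℕ, IsCoprime D ((k:ℤ) ^ t) :=
    fun t => (IsCoprime.pow_left (copr k hk hN) : IsCoprime ((k:ℤ)^t) D).symm
  rcases le_total (β % N) (α % N) with hle | hle
  · refine ⟨α % N - β % N, by have := Nat.mod_lt α (show 0 < N by omega); omega, Or.inl ?_⟩
    have hsplit : (k:ℤ) ^ (α % N) = (k:ℤ) ^ (β % N) * (k:ℤ) ^ (α % N - β % N) := by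
      rw [← pow_add, Nat.add_sub_cancel' hle]
    have hfac : (k:ℤ) ^ (α % N) * u - (k:ℤ) ^ (β % N) * u'
        = (k:ℤ) ^ (β % N) * ((k:ℤ) ^ (α % N - β % N) * u - u') := by
      rw [hsplit]; ring
    rw [hfac] at h'
    exact (hcop (β % N)).dvd_of_dvd_mul_left h'
  · refine ⟨β % N - α % N, by have := Nat.mod_lt β (show 0 < N by omega); omega, Or.inr ?_⟩
    have h'' : D ∣ (k:ℤ) ^ (β % N) * u' - (k:ℤ) ^ (α % N) * u := by
      have hx := dvd_neg.mpr h'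
      rwa [neg_sub] at hx
    have hsplit : (k:ℤ) ^ (β % N) = (k:ℤ) ^ (α % N) * (k:ℤ) ^ (β % N - α % N) := by
      rw [← pow_add, Nat.add_sub_cancel' hle]
    have hfac : (k:ℤ) ^ (β % N) * u' - (k:ℤ) ^ (α % N) * u
        = (k:ℤ) ^ (α % N) * ((k:ℤ) ^ (β % N - α % N) * u' - u) := by
      rw [hsplit]; ring
    rw [hfac] at h''
    exact (hcop (α % N)).dvd_of_dvd_mul_left h''


end BSAux


namespace BSAux

def Xval (k n r : ℕ) : ℕ := k ^ (5*n+7) * (k ^ (3*n+3) + r)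

def elem (k : ℕ) (hk : 2 ≤ k) (n r j : ℕ) : ↥(BS k hk) :=
  bsElem k hk ((Xval k n r : ℚ)) (natCast_mem_zOneOver k _) (((6*n+7+j : ℕ) : ℤ))

lemma elem_left (k : ℕ) (hk : 2 ≤ k) (n r j : ℕ) :
    Multiplicative.toAdd ((elem k hk n r j : BSAmbient k hk).left) = ((Xval k n r : ℚ)) := rfl

lemma elem_right (k : ℕ) (hk : 2 ≤ k) (n r j : ℕ) :
    Multiplicative.toAdd ((elem k hk n r j : BSAmbient k hk).right) = ((6*n+7+j : ℕ) : ℤ) := rfl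

lemma amb_mul_left (k : ℕ) (hk : 2 ≤ k) (g g' : BSAmbient k hk) :
    Multiplicative.toAdd ((g * g').left)
      = Multiplicative.toAdd g.left
        + (k:ℚ) ^ (Multiplicative.toAdd g.right) * Multiplicative.toAdd g'.left := by
  rw [SemidirectProduct.mul_left, toAdd_mul, zpowersHom_apply, bsAut_zpow]

lemma amb_mul_right (k : ℕ) (hk : 2 ≤ k) (g g' : BSAmbient k hk) :
    Multiplicative.toAdd ((g * g').right)
      = Multiplicative.toAdd g.right + Multiplicative.toAdd g'.right := by
  rw [SemidirectProduct.mul_right, toAdd_mul]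

lemma Xval_inj (k : ℕ) (hk : 2 ≤ k) {n r r' : ℕ} (h : Xval k n r = Xval k n r') : r = r' := by
  have hkpos : 0 < k ^ (5*n+7) := pow_pos (by omega) _
  unfold Xval at h
  have := Nat.eq_of_mul_eq_mul_left hkpos h
  omega

lemma elem_inj (k : ℕ) (hk : 2 ≤ k) (n : ℕ) :
    Function.Injective (fun p : ℕ × ℕ => elem k hk n p.1 p.2) := by
  rintro ⟨r, j⟩ ⟨r', j'⟩ h
  simp only at h
  have h1 : (elem k hk n r j : BSAmbient k hk) = elem k hk n r' j' := congrArg Subtype.val h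
  have hl : ((Xval k n r : ℕ) : ℚ) = ((Xval k n r' : ℕ) : ℚ) := by
    have := congrArg (fun g : BSAmbient k hk => Multiplicative.toAdd g.left) h1
    simpa [elem_left] using this
  have hrr : ((6*n+7+j : ℕ) : ℤ) = ((6*n+7+j' : ℕ) : ℤ) := by
    have := congrArg (fun g : BSAmbient k hk => Multiplicative.toAdd g.right) h1
    simpa [elem_right] using this
  have hX : Xval k n r = Xval k n r' := by exact_mod_cast hl
  have hj : j = j' := by
    have : (6*n+7+j : ℕ) = 6*n+7+j' := by exact_mod_cast hrr
    omega
  exact Prod.ext (by simpa using Xval_inj k hk hX) hj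

end BSAux


namespace BSAux

lemma kq_ne (k : ℕ) (hk : 2 ≤ k) : (k:ℚ) ≠ 0 := by
  have : 0 < k := by omega
  exact_mod_cast this.ne'

/-- Multiplying a box element on the right lands in the box again, under suitable bounds. -/
lemma elem_mul_mem (k : ℕ) (hk : 2 ≤ k) (n r j : ℕ) (x : ↥(BS k hk)) (b : ℤ) (v : ℕ)
    (hy : Multiplicative.toAdd ((x : BSAmbient k hk).left) = (b:ℚ) / (k:ℚ)^v)
    (hv : v ≤ n) (hj : j ≤ n)
    (hr0 : (0:ℤ) ≤ (r:ℤ) + (k:ℤ)^(n+j-v) * b)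
    (hr1 : (r:ℤ) + (k:ℤ)^(n+j-v) * b < (k:ℤ)^(3*n+3))
    (hw0 : 0 ≤ (j:ℤ) + Multiplicative.toAdd ((x : BSAmbient k hk).right))
    (hw1 : (j:ℤ) + Multiplicative.toAdd ((x : BSAmbient k hk).right) < n+1) :
    elem k hk n r j * x
      = elem k hk n ((r:ℤ) + (k:ℤ)^(n+j-v) * b).toNat
          ((j:ℤ) + Multiplicative.toAdd ((x : BSAmbient k hk).right)).toNat ∧
    ((r:ℤ) + (k:ℤ)^(n+j-v) * b).toNat < k^(3*n+3) ∧
    ((j:ℤ) + Multiplicative.toAdd ((x : BSAmbient k hk).right)).toNat < n+1 := by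
  set w := Multiplicative.toAdd ((x : BSAmbient k hk).right) with hw
  set r₂ := ((r:ℤ) + (k:ℤ)^(n+j-v) * b).toNat with hr₂
  set j₂ := ((j:ℤ) + w).toNat with hj₂
  have hr₂z : (r₂ : ℤ) = (r:ℤ) + (k:ℤ)^(n+j-v) * b := Int.toNat_of_nonneg hr0
  have hj₂z : (j₂ : ℤ) = (j:ℤ) + w := Int.toNat_of_nonneg hw0
  have hr₂lt : r₂ < k^(3*n+3) := by
    have : (r₂:ℤ) < ((k^(3*n+3) : ℕ) : ℤ) := by rw [hr₂z]; push_cast; exact hr1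
    exact_mod_cast this
  have hj₂lt : j₂ < n+1 := by omega
  refine ⟨?_, hr₂lt, hj₂lt⟩
  apply Subtype.ext
  have hcoe : ((elem k hk n r j * x : ↥(BS k hk)) : BSAmbient k hk)
      = (elem k hk n r j : BSAmbient k hk) * (x : BSAmbient k hk) := rfl
  rw [hcoe]
  apply SemidirectProduct.ext
  · -- left components
    apply Multiplicative.toAdd.injective
    rw [amb_mul_left k hk, elem_left, elem_right, elem_left, hy]
    have hkne := kq_ne k hk
    have hzp : ((k:ℚ) : ℚ) ^ (((6*n+7+j : ℕ) : ℤ)) = (k:ℚ) ^ (6*n+7+j : ℕ) := zpow_natCast _ _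
    rw [hzp]
    have hsplit : (k:ℚ) ^ (6*n+7+j : ℕ) = (k:ℚ) ^ (6*n+7+j-v : ℕ) * (k:ℚ)^v := by
      rw [← pow_add]
      congr 1
      omega
    rw [hsplit]
    have hcol : (k:ℚ)^(6*n+7+j-v : ℕ) * (k:ℚ)^(v:ℕ) * ((b:ℚ)/(k:ℚ)^(v:ℕ))
        = (k:ℚ)^(6*n+7+j-v : ℕ) * (b:ℚ) := by
      field_simp
    rw [hcol]
    -- goal : (Xval k n r : ℚ) + (k:ℚ)^(6*n+7+j-v) * b = (Xval k n r₂ : ℚ)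
    have hZ : ((Xval k n r₂ : ℕ) : ℤ) = ((Xval k n r : ℕ):ℤ) + (k:ℤ)^(6*n+7+j-v) * b := by
      unfold Xval
      push_cast
      rw [hr₂z]
      have hexp : (k:ℤ)^(5*n+7) * (k:ℤ)^(n+j-v) = (k:ℤ)^(6*n+7+j-v) := by
        rw [← pow_add]
        congr 1
        omega
      linear_combination b * hexp
    have := congrArg (fun z : ℤ => (z : ℚ)) hZ
    push_cast at this ⊢
    linarith [this]
  · -- right components
    apply Multiplicative.toAdd.injective
    rw [amb_mul_right k hk, elem_right, elem_right]
    push_cast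
    omega

end BSAux


namespace BSAux

lemma conj_eq (k : ℕ) (hk : 2 ≤ k) (n r j r' j' : ℕ)
    (hr : r < k^(3*n+3)) (hr' : r' < k^(3*n+3))
    (h : IsConj (elem k hk n r j) (elem k hk n r' j')) : r = r' ∧ j = j' := by
  obtain ⟨c, hc⟩ := isConj_iff.mp h
  have hc0 : c * elem k hk n r j = elem k hk n r' j' * c := by
    rw [← hc]; group
  have hc' : (c : BSAmbient k hk) * (elem k hk n r j : BSAmbient k hk)
      = (elem k hk n r' j' : BSAmbient k hk) * (c : BSAmbient k hk) :=
    congrArg Subtype.val hc0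
  -- right components give j = j'
  have hR : Multiplicative.toAdd ((c:BSAmbient k hk).right) + ((6*n+7+j : ℕ) : ℤ)
      = ((6*n+7+j' : ℕ) : ℤ) + Multiplicative.toAdd ((c:BSAmbient k hk).right) := by
    have := congrArg (fun g : BSAmbient k hk => Multiplicative.toAdd g.right) hc'
    simpa [amb_mul_right k hk, elem_right] using this
  have hj : j = j' := by
    have : (6*n+7+j : ℕ) = (6*n+7+j' : ℕ) := by exact_mod_cast by omega
    omega
  refine ⟨?_, hj⟩
  subst hj
  -- left components
  set z := Multiplicative.toAdd ((c:BSAmbient k hk).left) with hzdef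
  set m := Multiplicative.toAdd ((c:BSAmbient k hk).right) with hmdef
  set N := 6*n+7+j with hNdef
  have hL : z + (k:ℚ) ^ m * ((Xval k n r : ℕ) : ℚ)
      = ((Xval k n r' : ℕ) : ℚ) + (k:ℚ) ^ ((N : ℕ) : ℤ) * z := by
    have h0 := congrArg (fun g : BSAmbient k hk => Multiplicative.toAdd g.left) hc'
    rw [amb_mul_left k hk, amb_mul_left k hk, elem_left, elem_right] at h0
    exact h0
  obtain ⟨b, v, hz⟩ := zOneOver_exists_rep k hk c.2
  rw [← hzdef] at hz
  have hkne := kq_ne k hk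
  -- multiply through by k^e
  set e := v + (-m).toNat with hedef
  set a1 := (m + e).toNat with ha1def
  have ha1 : (a1 : ℤ) = m + e := by
    rw [ha1def]
    rw [Int.toNat_of_nonneg (by omega)]
  have hL2 := congrArg (fun t : ℚ => (k:ℚ)^(e:ℕ) * t) hL
  rw [hz] at hL2
  -- rewrite each term
  have hkev : (k:ℚ)^(e:ℕ) = (k:ℚ)^(e-v : ℕ) * (k:ℚ)^(v:ℕ) := by
    rw [← pow_add]; congr 1; omega
  have t1 : (k:ℚ)^(e:ℕ) * ((b:ℚ)/(k:ℚ)^(v:ℕ)) = (k:ℚ)^(e-v:ℕ) * b := by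
    rw [hkev]; field_simp
  have t2 : (k:ℚ)^(e:ℕ) * ((k:ℚ)^m * ((Xval k n r : ℕ):ℚ))
      = (k:ℚ)^(a1:ℕ) * ((Xval k n r : ℕ):ℚ) := by
    have : (k:ℚ)^(e:ℕ) * (k:ℚ)^m = (k:ℚ)^(a1:ℕ) := by
      rw [← zpow_natCast (k:ℚ) e, ← zpow_natCast (k:ℚ) a1, ← zpow_add₀ hkne, ha1]
      congr 1
      omega
    rw [← mul_assoc, this]
  have t3 : (k:ℚ)^(e:ℕ) * ((k:ℚ)^((N:ℕ):ℤ) * ((b:ℚ)/(k:ℚ)^(v:ℕ)))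
      = (k:ℚ)^(e+N-v:ℕ) * b := by
    rw [zpow_natCast]
    have hsp : (k:ℚ)^(e:ℕ) * (k:ℚ)^(N:ℕ) = (k:ℚ)^(e+N-v:ℕ) * (k:ℚ)^(v:ℕ) := by
      rw [← pow_add, ← pow_add]; congr 1; omega
    rw [← mul_assoc, hsp]
    field_simp
  rw [mul_add, mul_add, t1, t2, t3] at hL2
  -- now cast to ℤ
  have hZ : (k:ℤ)^(e-v:ℕ) * b + (k:ℤ)^(a1:ℕ) * (Xval k n r : ℕ)
      = (k:ℤ)^(e:ℕ) * (Xval k n r' : ℕ) + (k:ℤ)^(e+N-v:ℕ) * b := by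
    have h4 : (k:ℚ)^(e:ℕ) * ((Xval k n r' : ℕ):ℚ)
        = (((k:ℤ)^(e:ℕ) * (Xval k n r' : ℕ) : ℤ) : ℚ) := by push_cast; ring
    exact_mod_cast hL2
  have hdvd : ((k:ℤ)^N - 1) ∣ (k:ℤ)^(a1:ℕ) * ((Xval k n r : ℕ):ℤ)
      - (k:ℤ)^(e:ℕ) * ((Xval k n r' : ℕ):ℤ) := by
    refine ⟨(k:ℤ)^(e-v:ℕ) * b, ?_⟩
    have hsp : (k:ℤ)^(e+N-v:ℕ) = (k:ℤ)^N * (k:ℤ)^(e-v:ℕ) := by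
      rw [← pow_add]; congr 1; omega
    have := hZ
    rw [hsp] at this
    linarith [this]
  -- rewrite Xval in terms of u = k^q + r
  have hXA : ((Xval k n r : ℕ) : ℤ) = (k:ℤ)^(5*n+7) * ((k:ℤ)^(3*n+3) + r) := by
    unfold Xval; push_cast; ring
  have hXB : ((Xval k n r' : ℕ) : ℤ) = (k:ℤ)^(5*n+7) * ((k:ℤ)^(3*n+3) + r') := by
    unfold Xval; push_cast; ring
  rw [hXA, hXB] at hdvd
  have hdvd2 : ((k:ℤ)^N - 1) ∣ (k:ℤ)^(a1+(5*n+7)) * ((k:ℤ)^(3*n+3) + r)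
      - (k:ℤ)^(e+(5*n+7)) * ((k:ℤ)^(3*n+3) + r') := by
    have e1 : (k:ℤ)^(a1+(5*n+7)) = (k:ℤ)^(a1:ℕ) * (k:ℤ)^(5*n+7) := by rw [← pow_add]
    have e2 : (k:ℤ)^(e+(5*n+7)) = (k:ℤ)^(e:ℕ) * (k:ℤ)^(5*n+7) := by rw [← pow_add]
    rw [e1, e2]
    have hre : (k:ℤ)^(a1:ℕ) * (k:ℤ)^(5*n+7) * ((k:ℤ)^(3*n+3) + r)
        - (k:ℤ)^(e:ℕ) * (k:ℤ)^(5*n+7) * ((k:ℤ)^(3*n+3) + r')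
        = (k:ℤ)^(a1:ℕ) * ((k:ℤ)^(5*n+7) * ((k:ℤ)^(3*n+3) + r))
        - (k:ℤ)^(e:ℕ) * ((k:ℤ)^(5*n+7) * ((k:ℤ)^(3*n+3) + r')) := by ring
    rw [hre]
    exact hdvd
  have hN1 : 1 ≤ N := by omega
  obtain ⟨m'', hm''N, hcase⟩ := lemC k hk hN1 hdvd2
  have hq1 : 1 ≤ 3*n+3 := by omega
  have h2q : 2*(3*n+3) < N := by omega
  rcases hcase with hc1 | hc1
  · exact lemE k hk hq1 h2q hr hr' hm''N hc1
  · exact (lemE k hk hq1 h2q hr' hr hm''N hc1).symm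

end BSAux


namespace BSAux

lemma count_ineq (C Wn L' h' B : ℕ) (hC : C * (h' + Wn) ≤ (B+1) * (L' + 2*C)) :
    2 * ((L'+2*C)*(h'+Wn) - L'*h') * (h'+Wn) ≤ (2*Wn + 4*(B+1)) * ((L'+2*C)*(h'+Wn)) := by
  have hexp : (L'+2*C)*(h'+Wn) = (L'*Wn + 2*C*h' + 2*C*Wn) + L'*h' := by ring
  have heq : (L'+2*C)*(h'+Wn) - L'*h' = L'*Wn + 2*C*h' + 2*C*Wn :=
    Nat.sub_eq_of_eq_add hexp
  rw [heq]
  nlinarith [Nat.mul_le_mul_right (4*(h'+Wn)) hC, Nat.zero_le (L'*h'), Nat.zero_le (C*Wn)]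

lemma pow_ge_lin (k n : ℕ) (hk : 2 ≤ k) : 2*n + 2 ≤ k ^ (n+3) := by
  have h1 : n < 2 ^ n := Nat.lt_two_pow_self
  have h2 : (2:ℕ) ^ (n+2) ≤ 2 ^ (n+3) := Nat.pow_le_pow_right (by omega) (by omega)
  have h2' : (2:ℕ) ^ n * 4 = 2 ^ (n+2) := by rw [pow_add]; ring
  have h3 : (2:ℕ) ^ (n+3) ≤ k ^ (n+3) := Nat.pow_le_pow_left hk _
  omega

end BSAux

set_option maxHeartbeats 1600000

/-- Let `k ≥ 2` and `G = BS(1,k) = ℤ[1/k] ⋊_φ ℤ`.  There is a sequence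
`(F_n)` of nonempty finite subsets of `G` which is a right Følner sequence
(`|F_n·x △ F_n|/|F_n| → 0` for every `x ∈ G`) and satisfies `c(F_n) = |F_n|` for every `n`;
in particular the conjugacy ratio of `G` with respect to `(F_n)` is `1`. -/
theorem bs_right_folner_conjugacy_ratio_one (k : ℕ) (hk : 2 ≤ k) :
    ∃ F : ℕ → Set ↥(BS k hk),
      (∀ n, (F n).Finite ∧ (F n).Nonempty) ∧
      (∀ x : ↥(BS k hk),
        Filter.Tendsto
          (fun n => (((symmDiff ((fun y => y * x) '' F n) (F n)).ncard : ℝ)) / ((F n).ncard : ℝ))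
          Filter.atTop (nhds 0)) ∧
      (∀ n, (ConjClasses.mk '' F n).ncard = (F n).ncard) := by
  classical
  set Fb : ℕ → Finset ↥(BS k hk) := fun n =>
    (Finset.range (k^(3*n+3)) ×ˢ Finset.range (n+1)).image
      (fun p : ℕ × ℕ => BSAux.elem k hk n p.1 p.2) with hFb
  have hmemFb : ∀ n r j, r < k^(3*n+3) → j < n+1 → BSAux.elem k hk n r j ∈ Fb n := by
    intro n r j h1 h2
    exact Finset.mem_image.mpr ⟨(r,j),
      Finset.mem_product.mpr ⟨Finset.mem_range.mpr h1, Finset.mem_range.mpr h2⟩, rfl⟩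
  have hmemFb' : ∀ n g, g ∈ Fb n → ∃ r, r < k^(3*n+3) ∧ ∃ j, j < n+1 ∧ g = BSAux.elem k hk n r j := by
    intro n g hg
    obtain ⟨⟨r,j⟩, hp, rfl⟩ := Finset.mem_image.mp hg
    obtain ⟨h1, h2⟩ := Finset.mem_product.mp hp
    exact ⟨r, Finset.mem_range.mp h1, j, Finset.mem_range.mp h2, rfl⟩
  have hcard : ∀ n, (Fb n).card = k^(3*n+3) * (n+1) := by
    intro n
    rw [hFb]
    rw [Finset.card_image_of_injective _ (BSAux.elem_inj k hk n), Finset.card_product,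
      Finset.card_range, Finset.card_range]
  refine ⟨fun n => ↑(Fb n), ?_, ?_, ?_⟩
  · intro n
    exact ⟨Finset.finite_toSet _,
      ⟨BSAux.elem k hk n 0 0, hmemFb n 0 0 (pow_pos (by omega) _) (by omega)⟩⟩
  · -- Følner property
    intro x
    obtain ⟨b, v, hy⟩ := BSAux.zOneOver_exists_rep k hk x.2
    set w : ℤ := Multiplicative.toAdd ((x : BSAmbient k hk).right) with hwdef
    set B : ℕ := b.natAbs with hBdef
    set W : ℕ := w.natAbs with hWdef
    set N₀ : ℕ := v + W + B + 1 with hN0def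
    have key : ∀ n, N₀ ≤ n →
        (((symmDiff ((fun y => y * x) '' (↑(Fb n) : Set ↥(BS k hk))) ↑(Fb n)).ncard : ℝ))
            / (((↑(Fb n) : Set ↥(BS k hk)).ncard : ℝ))
          ≤ (2*W + 4*(B+1) : ℝ) / (n+1) := by
      intro n hn
      have hvn : v ≤ n := by omega
      have hBn : B ≤ n := by omega
      have hWn : W ≤ n + 1 := by omega
      set L : ℕ := k^(3*n+3) with hLdef
      set C : ℕ := k^(2*n) * B with hCdef
      have hlin : 2*n + 2 ≤ k^(n+3) := BSAux.pow_ge_lin k n hk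
      have hLCC : L = k^(2*n) * k^(n+3) := by rw [hLdef, ← pow_add]; congr 1; omega
      have h2CL : 2*C ≤ L := by
        rw [hLCC, hCdef]
        calc 2*(k^(2*n)*B) = k^(2*n) * (2*B) := by ring
          _ ≤ k^(2*n) * k^(n+3) := Nat.mul_le_mul_left _ (by omega)
      have hCineq : C * (n+1) ≤ (B+1) * L := by
        rw [hLCC, hCdef]
        calc k^(2*n)*B*(n+1) ≤ k^(2*n)*B*(k^(n+3)) := Nat.mul_le_mul_left _ (by omega)
          _ = B * (k^(2*n)*k^(n+3)) := by ring
          _ ≤ (B+1) * (k^(2*n)*k^(n+3)) := Nat.mul_le_mul_right _ (by omega)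
      set sbox : Finset (ℕ × ℕ) :=
        Finset.Ico C (L - C) ×ˢ Finset.Ico ((-w).toNat) ((n+1) - w.toNat) with hsbox
      set S : Finset ↥(BS k hk) :=
        sbox.image (fun p : ℕ × ℕ => BSAux.elem k hk n p.1 p.2 * x) with hSdef
      have hSmem : ∀ p : ℕ × ℕ, p ∈ sbox → BSAux.elem k hk n p.1 p.2 * x ∈ Fb n := by
        rintro ⟨r, j⟩ hp
        obtain ⟨hpr, hpj⟩ := Finset.mem_product.mp hp
        obtain ⟨hra, hrb⟩ := Finset.mem_Ico.mp hpr
        obtain ⟨hja, hjb⟩ := Finset.mem_Ico.mp hpj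
        have hjn : j ≤ n := by omega
        have hkpow : (k:ℤ)^(n+j-v) ≤ (k:ℤ)^(2*n) := by
          apply pow_le_pow_right₀ (by exact_mod_cast (by omega : 1 ≤ k))
          omega
        have hkpos : (0:ℤ) < (k:ℤ)^(n+j-v) := pow_pos (by exact_mod_cast (by omega : 0 < k)) _
        have hbB : -(B:ℤ) ≤ b ∧ b ≤ (B:ℤ) := by constructor <;> omega
        have hCcast : (C:ℤ) = (k:ℤ)^(2*n) * B := by rw [hCdef]; push_cast; ring
        have hshift1 : -(C:ℤ) ≤ (k:ℤ)^(n+j-v) * b := by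
          rw [hCcast]
          nlinarith [hbB.1, hbB.2, hkpow, hkpos, Int.natCast_nonneg B]
        have hshift2 : (k:ℤ)^(n+j-v) * b ≤ (C:ℤ) := by
          rw [hCcast]
          nlinarith [hbB.1, hbB.2, hkpow, hkpos, Int.natCast_nonneg B]
        have hr0 : (0:ℤ) ≤ (r:ℤ) + (k:ℤ)^(n+j-v) * b := by
          have : (C:ℤ) ≤ (r:ℤ) := by exact_mod_cast hra
          linarith
        have hr1 : (r:ℤ) + (k:ℤ)^(n+j-v) * b < (k:ℤ)^(3*n+3) := by
          have hL1 : (r:ℤ) < (L:ℤ) - (C:ℤ) := by omega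
          have hL2 : ((L:ℕ):ℤ) = (k:ℤ)^(3*n+3) := by rw [hLdef]; push_cast; ring
          linarith
        have hw0 : 0 ≤ (j:ℤ) + w := by omega
        have hw1 : (j:ℤ) + w < (n:ℤ)+1 := by omega
        obtain ⟨heq, hbo1, hbo2⟩ :=
          BSAux.elem_mul_mem k hk n r j x b v hy hvn hjn hr0 hr1 hw0 hw1
        rw [heq]
        exact hmemFb n _ _ hbo1 hbo2
      have hinj2 : Function.Injective (fun p : ℕ × ℕ => BSAux.elem k hk n p.1 p.2 * x) := by
        intro p p' hpq
        exact BSAux.elem_inj k hk n (mul_right_cancel hpq)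
      have hSsubF : S ⊆ Fb n := by
        intro g hg
        obtain ⟨p, hp, rfl⟩ := Finset.mem_image.mp hg
        exact hSmem p hp
      have hsboxsub : sbox ⊆ Finset.range L ×ˢ Finset.range (n+1) := by
        rintro ⟨r, j⟩ hp
        obtain ⟨hpr, hpj⟩ := Finset.mem_product.mp hp
        obtain ⟨hra, hrb⟩ := Finset.mem_Ico.mp hpr
        obtain ⟨hja, hjb⟩ := Finset.mem_Ico.mp hpj
        exact Finset.mem_product.mpr ⟨Finset.mem_range.mpr (by omega), Finset.mem_range.mpr (by omega)⟩
      set A : Set ↥(BS k hk) := (fun y => y * x) '' (↑(Fb n) : Set ↥(BS k hk)) with hAdef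
      have hSsubA : (↑S : Set ↥(BS k hk)) ⊆ A := by
        intro g hg
        obtain ⟨p, hp, rfl⟩ := Finset.mem_image.mp (Finset.mem_coe.mp hg)
        exact ⟨BSAux.elem k hk n p.1 p.2,
          Finset.mem_coe.mpr (Finset.mem_image.mpr ⟨p, hsboxsub hp, rfl⟩), rfl⟩
      have hSsubB : (↑S : Set ↥(BS k hk)) ⊆ (↑(Fb n) : Set ↥(BS k hk)) := fun g hg =>
        Finset.mem_coe.mpr (hSsubF (Finset.mem_coe.mp hg))
      have hScard : S.card = (L - C - C) * (((n+1) - w.toNat) - (-w).toNat) := by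
        rw [hSdef, Finset.card_image_of_injective _ hinj2, hsbox, Finset.card_product,
          Nat.card_Ico, Nat.card_Ico]
      have hAfin : A.Finite := (Finset.finite_toSet (Fb n)).image _
      have hAncard : A.ncard = (Fb n).card := by
        rw [hAdef, Set.ncard_image_of_injective _ (mul_left_injective x), Set.ncard_coe_finset]
      have hsymsub : symmDiff A (↑(Fb n) : Set ↥(BS k hk))
          ⊆ (A \ ↑S) ∪ ((↑(Fb n) : Set ↥(BS k hk)) \ ↑S) := by
        intro g hg
        rcases Set.mem_symmDiff.mp hg with ⟨hgA, hgB⟩ | ⟨hgB, hgA⟩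
        · exact Or.inl ⟨hgA, fun hgS => hgB (hSsubB hgS)⟩
        · exact Or.inr ⟨hgB, fun hgS => hgA (hSsubA hgS)⟩
      have hup : (symmDiff A (↑(Fb n) : Set ↥(BS k hk))).ncard
          ≤ ((Fb n).card - S.card) + ((Fb n).card - S.card) := by
        calc (symmDiff A (↑(Fb n) : Set ↥(BS k hk))).ncard
            ≤ ((A \ ↑S) ∪ ((↑(Fb n) : Set ↥(BS k hk)) \ ↑S)).ncard :=
              Set.ncard_le_ncard hsymsub
                ((hAfin.diff).union ((Finset.finite_toSet (Fb n)).diff))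
          _ ≤ (A \ ↑S).ncard + ((↑(Fb n) : Set ↥(BS k hk)) \ ↑S).ncard := Set.ncard_union_le _ _
          _ = ((Fb n).card - S.card) + ((Fb n).card - S.card) := by
              rw [Set.ncard_diff hSsubA (Finset.finite_toSet S),
                Set.ncard_diff hSsubB (Finset.finite_toSet S), hAncard,
                Set.ncard_coe_finset, Set.ncard_coe_finset]
      have hkeyN : 2 * ((Fb n).card - S.card) * (n+1) ≤ (2*W + 4*(B+1)) * (Fb n).card := by
        rw [hcard n, hScard]
        have e1 : L - C - C = L - 2*C := by omega
        have e2 : ((n+1) - w.toNat) - (-w).toNat = (n+1) - W := by omega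
        rw [e1, e2]
        have e3 : L = (L - 2*C) + 2*C := by omega
        have e4 : (n+1) = ((n+1) - W) + W := by omega
        have hCi : C * (((n+1) - W) + W) ≤ (B+1) * ((L - 2*C) + 2*C) := by
          rw [← e3, ← e4]; exact hCineq
        have hfin := BSAux.count_ineq C W (L - 2*C) ((n+1) - W) B hCi
        rw [← e3, ← e4] at hfin
        exact hfin
      -- pass to the reals
      have hPeq : ((↑(Fb n) : Set ↥(BS k hk)).ncard) = L * (n+1) := by
        rw [Set.ncard_coe_finset, hcard n]
      rw [hPeq]
      have hLpos : 0 < L := pow_pos (by omega) _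
      rw [div_le_div_iff₀ (by positivity) (by positivity)]
      have hfinalN : (symmDiff A (↑(Fb n) : Set ↥(BS k hk))).ncard * (n+1)
          ≤ (2*W + 4*(B+1)) * (L * (n+1)) := by
        calc (symmDiff A (↑(Fb n) : Set ↥(BS k hk))).ncard * (n+1)
            ≤ (2 * ((Fb n).card - S.card)) * (n+1) := by
              apply Nat.mul_le_mul_right
              omega
          _ ≤ (2*W + 4*(B+1)) * (Fb n).card := hkeyN
          _ = (2*W + 4*(B+1)) * (L * (n+1)) := by rw [hcard n]
      calc ((symmDiff A (↑(Fb n) : Set ↥(BS k hk))).ncard : ℝ) * ((n:ℝ)+1)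
          = (((symmDiff A (↑(Fb n) : Set ↥(BS k hk))).ncard * (n+1) : ℕ) : ℝ) := by push_cast; ring
        _ ≤ (((2*W + 4*(B+1)) * (L * (n+1)) : ℕ) : ℝ) := by exact_mod_cast hfinalN
        _ = (2*W + 4*(B+1) : ℝ) * ((L * (n+1) : ℕ) : ℝ) := by push_cast; ring
    have hlim : Filter.Tendsto (fun n : ℕ => (2*W + 4*(B+1) : ℝ)/(n+1))
        Filter.atTop (nhds 0) := by
      have h0 : Filter.Tendsto (fun n : ℕ => 1 / ((n : ℝ) + 1)) Filter.atTop (nhds 0) :=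
        tendsto_one_div_add_atTop_nhds_zero_nat
      have h1 := h0.const_mul ((2*W + 4*(B+1) : ℝ))
      simp only [mul_zero] at h1
      convert h1 using 2 with n
      rw [mul_one_div]
    refine tendsto_of_tendsto_of_tendsto_of_le_of_le' tendsto_const_nhds hlim ?_ ?_
    · exact Filter.Eventually.of_forall (fun n => div_nonneg (Nat.cast_nonneg _) (Nat.cast_nonneg _))
    · exact Filter.eventually_atTop.mpr ⟨N₀, key⟩
  · -- conjugacy classes
    intro n
    apply Set.ncard_image_of_injOn
    intro g hg g' hg' hmk
    obtain ⟨r, hrb, j, hjb, rfl⟩ := hmemFb' n g (Finset.mem_coe.mp hg)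
    obtain ⟨r', hrb', j', hjb', rfl⟩ := hmemFb' n g' (Finset.mem_coe.mp hg')
    obtain ⟨hre, hje⟩ := BSAux.conj_eq k hk n r j r' j' hrb hrb'
      (ConjClasses.mk_eq_mk_iff_isConj.mp hmk)
    rw [hre, hje]
end
end

section
/- Let G = K ⋊_φ ⟨t⟩ be a finitely generated abelian-by-cyclic group and let f : ℕ → ℝ≥0 be a function with f(r) → ∞. For r ∈ ℕ let U_f(r) be the set of elements of G of the form t^{-p}·u₀·t·u₁·t·⋯·u_{d-1}·t·u_d·t^{-q}·t^m where p, q ≥ 0, d = p + q ≤ f(r), 0 ≤ m ≤ r, and each u_i is a sum of at most r elements of R. Then there exist C > 0 and r₀ such that |U_f(r)| ≤ r^{C·f(r)} for all r ≥ r₀. -/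
open scoped Pointwise

section Aux
variable {K : Type*} [CommGroup K] (φ : MulAut K)

/-- The normal form expression. -/
def Fform (p q m : ℕ) (u : ℕ → K) : K ⋊[zpowersHom (MulAut K) φ] Multiplicative ℤ :=
  SemidirectProduct.inr (Multiplicative.ofAdd (-(p : ℤ))) *
    ((List.range (p + q)).map (fun i =>
      SemidirectProduct.inl (u i) *
        SemidirectProduct.inr (Multiplicative.ofAdd (1 : ℤ)))).prod *
    SemidirectProduct.inl (u (p + q)) *
    SemidirectProduct.inr (Multiplicative.ofAdd (-(q : ℤ))) *
    SemidirectProduct.inr (Multiplicative.ofAdd (m : ℤ))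

lemma Fform_congr (p q m : ℕ) {u u' : ℕ → K} (h : ∀ i ≤ p + q, u i = u' i) :
    Fform φ p q m u = Fform φ p q m u' := by
  unfold Fform
  rw [h (p + q) le_rfl,
    List.map_congr_left (fun i hi => by rw [h i (le_of_lt (List.mem_range.mp hi))])]

lemma myCountProd {M : Type*} [CommMonoid M] [DecidableEq M] (Rf : Finset M) (l : List M)
    (h : ∀ x ∈ l, x ∈ Rf) : (∏ x ∈ Rf, x ^ l.count x) = l.prod := by
  rw [Finset.prod_list_count l]
  exact (Finset.prod_subset (fun x hx => h x (List.mem_toFinset.mp hx))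
    (fun x _ hx => by rw [List.count_eq_zero.mpr (by simpa using hx), pow_zero])).symm

end Aux

/-- Let `G = K ⋊_φ ⟨t⟩` be a finitely generated abelian-by-cyclic group
(`K` abelian, written multiplicatively, `t` acting by `φ`), with
`S = {(r,1) : r ∈ R} ∪ {(1,t),(1,t⁻¹)}` for a finite symmetric subset `R` of `K` containing the
identity, and let `f : ℕ → ℝ≥0` with `f(r) → ∞`.  For `r ∈ ℕ` let `U_f(r)` be the set of
elements of `G` of the form `t^{-p}·u₀·t·u₁·t·⋯·u_{d-1}·t·u_d·t^{-q}·t^m` with `p, q ≥ 0`,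
`d = p + q ≤ f(r)`, `0 ≤ m ≤ r`, and each `uᵢ` a product of at most `r` elements of `R`.
Then there are `C > 0` and `r₀` with `|U_f(r)| ≤ r^{C·f(r)}` for all `r ≥ r₀`. -/
theorem card_few_t_elements_le
    {K : Type*} [CommGroup K] (φ : MulAut K)
    (R : Set K) (hRfin : R.Finite) (hRsymm : R⁻¹ = R) (hR1 : (1 : K) ∈ R)
    (S : Set (K ⋊[zpowersHom (MulAut K) φ] Multiplicative ℤ))
    (hS : S = (⇑(SemidirectProduct.inl) '' R) ∪
        {SemidirectProduct.inr (Multiplicative.ofAdd (1 : ℤ)),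
         SemidirectProduct.inr (Multiplicative.ofAdd (-1 : ℤ))})
    (hSgen : Subgroup.closure S = ⊤)
    (f : ℕ → ℝ) (hf0 : ∀ r, 0 ≤ f r) (hf : Filter.Tendsto f Filter.atTop Filter.atTop)
    (U : ℕ → Set (K ⋊[zpowersHom (MulAut K) φ] Multiplicative ℤ))
    (hU : ∀ r : ℕ, U r =
      {g : K ⋊[zpowersHom (MulAut K) φ] Multiplicative ℤ |
        ∃ (p q m : ℕ) (u : ℕ → K),
          ((p + q : ℕ) : ℝ) ≤ f r ∧ m ≤ r ∧
          (∀ i ≤ p + q, ∃ l : List K, l.length ≤ r ∧ (∀ x ∈ l, x ∈ R) ∧ l.prod = u i) ∧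
          g = SemidirectProduct.inr (Multiplicative.ofAdd (-(p : ℤ))) *
              ((List.range (p + q)).map (fun i =>
                SemidirectProduct.inl (u i) *
                  SemidirectProduct.inr (Multiplicative.ofAdd (1 : ℤ)))).prod *
              SemidirectProduct.inl (u (p + q)) *
              SemidirectProduct.inr (Multiplicative.ofAdd (-(q : ℤ))) *
              SemidirectProduct.inr (Multiplicative.ofAdd (m : ℤ))}) :
    ∃ (C : ℝ) (r₀ : ℕ), 0 < C ∧ ∀ r : ℕ, r₀ ≤ r →
      ((U r).ncard : ℝ) ≤ (r : ℝ) ^ (C * f r) := by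
  classical
  set Rf : Finset K := hRfin.toFinset with hRfdef
  set k : ℕ := Rf.card with hkdef
  obtain ⟨r₁, hr₁⟩ : ∃ r₁ : ℕ, ∀ r ≥ r₁, 1 ≤ f r :=
    Filter.eventually_atTop.mp (hf.eventually_ge_atTop 1)
  refine ⟨4 * k + 6, max r₁ 2, by positivity, ?_⟩
  intro r hr
  have hr2 : 2 ≤ r := le_trans (le_max_right _ _) hr
  have hf1 : 1 ≤ f r := hr₁ r (le_trans (le_max_left _ _) hr)
  set n : ℕ := ⌊f r⌋₊ with hndef
  -- the encoding map
  set A := Fin (n + 1) × Fin (n + 1) × Fin (r + 1) × (Fin (n + 1) → ↥Rf → Fin (r + 1)) with hAdef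
  set v : (Fin (n + 1) → ↥Rf → Fin (r + 1)) → ℕ → K := fun c i =>
    if h : i < n + 1 then ∏ x ∈ Rf.attach, (x : K) ^ ((c ⟨i, h⟩ x : Fin (r + 1)) : ℕ) else 1
    with hvdef
  set Φ : A → K ⋊[zpowersHom (MulAut K) φ] Multiplicative ℤ := fun a =>
    Fform φ a.1 a.2.1 a.2.2.1 (v a.2.2.2) with hΦdef
  -- U r is contained in the range of Φ
  have hsub : U r ⊆ Set.range Φ := by
    intro g hg
    rw [hU r] at hg
    obtain ⟨p, q, m, u, hpq, hm, hlists, hgeq⟩ := hg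
    have hpqn : p + q ≤ n := Nat.le_floor hpq
    choose L hLlen hLmem hLprod using hlists
    set c : Fin (n + 1) → ↥Rf → Fin (r + 1) := fun i x =>
      if h : (i : ℕ) ≤ p + q then
        ⟨(L i h).count (x : K), Nat.lt_succ_of_le (le_trans List.count_le_length (hLlen i h))⟩
      else 0 with hcdef
    have hvu : ∀ i ≤ p + q, v c i = u i := by
      intro i hi
      have hi' : i < n + 1 := Nat.lt_succ_of_le (le_trans hi hpqn)
      have h1 : v c i = ∏ x ∈ Rf.attach, (x : K) ^ ((c ⟨i, hi'⟩ x : Fin (r + 1)) : ℕ) := by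
        rw [hvdef]; exact dif_pos hi'
      rw [h1]
      have h2 : ∀ x : ↥Rf, ((c ⟨i, hi'⟩ x : Fin (r + 1)) : ℕ) = (L i hi).count (x : K) := by
        intro x
        simp only [hcdef]
        rw [dif_pos hi]
      calc (∏ x ∈ Rf.attach, (x : K) ^ ((c ⟨i, hi'⟩ x : Fin (r + 1)) : ℕ))
          = ∏ x ∈ Rf.attach, (x : K) ^ ((L i hi).count (x : K)) := by
            refine Finset.prod_congr rfl fun x _ => by rw [h2 x]
        _ = ∏ x ∈ Rf, x ^ ((L i hi).count x) :=
            Finset.prod_attach Rf (fun y => y ^ (L i hi).count y)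
        _ = (L i hi).prod := myCountProd Rf _ (fun x hx => hRfin.mem_toFinset.mpr (hLmem i hi x hx))
        _ = u i := hLprod i hi
    refine ⟨(⟨p, by omega⟩, ⟨q, by omega⟩, ⟨m, by omega⟩, c), ?_⟩
    show Fform φ p q m (v c) = g
    rw [Fform_congr φ p q m hvu]
    exact hgeq.symm
  -- cardinality bound
  have hcardA : Fintype.card A = (n + 1) * ((n + 1) * ((r + 1) * ((r + 1) ^ k) ^ (n + 1))) := by
    simp [hAdef, hkdef, Fintype.card_fun, Fintype.card_coe]
  have hncard : (U r).ncard ≤ Fintype.card A := by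
    calc (U r).ncard ≤ (Set.range Φ).ncard :=
          Set.ncard_le_ncard hsub (Set.finite_range Φ)
      _ ≤ (Set.univ : Set A).ncard := by
          rw [← Set.image_univ]; exact Set.ncard_image_le Set.finite_univ
      _ = Fintype.card A := by rw [Set.ncard_univ, Nat.card_eq_fintype_card]
  -- numeric estimate
  set E : ℕ := 2 * (n + 1) + (2 + 2 * k * (n + 1)) with hEdef
  have hle1 : n + 1 ≤ r ^ (n + 1) :=
    le_trans (Nat.lt_two_pow_self (n := n + 1)).le (Nat.pow_le_pow_left hr2 _)
  have hle2 : r + 1 ≤ r ^ 2 := by nlinarith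
  have hle3 : (r + 1) ^ k ≤ r ^ (2 * k) := by
    calc (r + 1) ^ k ≤ (r ^ 2) ^ k := Nat.pow_le_pow_left hle2 k
      _ = r ^ (2 * k) := by rw [← pow_mul]
  have hnat : Fintype.card A ≤ r ^ E := by
    rw [hcardA]
    calc (n + 1) * ((n + 1) * ((r + 1) * ((r + 1) ^ k) ^ (n + 1)))
        ≤ r ^ (n + 1) * (r ^ (n + 1) * (r ^ 2 * (r ^ (2 * k)) ^ (n + 1))) := by
          gcongr
      _ = r ^ E := by
          rw [← pow_mul, ← pow_add, ← pow_add, ← pow_add, hEdef]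
          congr 1
          ring
  -- pass to reals
  have hnf : (n : ℝ) ≤ f r := Nat.floor_le (hf0 r)
  have hEC : (E : ℝ) ≤ (4 * k + 6) * f r := by
    have hk0 : (0 : ℝ) ≤ (k : ℝ) := Nat.cast_nonneg k
    rw [hEdef]
    push_cast
    nlinarith [mul_nonneg hk0 (sub_nonneg.mpr hf1), mul_nonneg hk0 (sub_nonneg.mpr hnf)]
  have hr1 : (1 : ℝ) ≤ (r : ℝ) := by exact_mod_cast le_trans (by norm_num) hr2
  calc ((U r).ncard : ℝ) ≤ ((r ^ E : ℕ) : ℝ) := by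
        exact_mod_cast le_trans hncard hnat
    _ = (r : ℝ) ^ (E : ℝ) := by push_cast; rw [Real.rpow_natCast]
    _ ≤ (r : ℝ) ^ ((4 * k + 6) * f r) := Real.rpow_le_rpow_of_exponent_le hr1 hEC
end

section
/- Let R be a ring, let M be a Noetherian R-module, and let φ : M → M be an R-module automorphism. Then there exists N ≥ 1 such that every periodic point of φ has period dividing N; that is, for every x ∈ M, if φⁿ(x) = x for some integer n ≥ 1, then φᴺ(x) = x. -/
/-- Let `R` be a ring, `M` a Noetherian `R`-module and `φ : M ≃ₗ[R] M`
an `R`-module automorphism. Then there exists `N ≥ 1` such that every periodic point of `φ`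
has period dividing `N`: if `φⁿ x = x` for some `n ≥ 1`, then `φᴺ x = x`. -/
theorem bounded_period_of_noetherian
    {R M : Type*} [Ring R] [AddCommGroup M] [Module R M] [IsNoetherian R M]
    (φ : M ≃ₗ[R] M) :
    ∃ N : ℕ, 1 ≤ N ∧ ∀ x : M, (∃ n : ℕ, 1 ≤ n ∧ (φ ^ n) x = x) → (φ ^ N) x = x := by
  set F : ℕ → Submodule R M := fun m =>
    LinearMap.ker ((φ ^ m : M ≃ₗ[R] M).toLinearMap - LinearMap.id) with hF
  have hmem : ∀ (m : ℕ) (x : M), x ∈ F m ↔ (φ ^ m) x = x := by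
    intro m x
    simp [hF, LinearMap.mem_ker, sub_eq_zero]
  have hfix : ∀ (m k : ℕ) (x : M), (φ ^ m) x = x → (φ ^ (m * k)) x = x := by
    intro m k x hx
    induction k with
    | zero => simp
    | succ k ih =>
      rw [mul_add, mul_one, pow_add]
      show (φ ^ (m * k)) ((φ ^ m) x) = x
      rw [hx, ih]
  have hmono : Monotone fun k => F (Nat.factorial k) := by
    apply monotone_nat_of_le_succ
    intro k x hx
    rw [hmem] at hx ⊢
    rw [Nat.factorial_succ, mul_comm]
    exact hfix _ _ _ hx
  obtain ⟨N, hN⟩ := monotone_stabilizes_iff_noetherian.mpr inferInstance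
    ⟨fun k => F (Nat.factorial k), hmono⟩
  refine ⟨Nat.factorial N, Nat.one_le_iff_ne_zero.mpr (Nat.factorial_ne_zero N), ?_⟩
  rintro x ⟨n, hn1, hn⟩
  have hx : x ∈ F (Nat.factorial n) := by
    rw [hmem]
    obtain ⟨c, hc⟩ := Nat.dvd_factorial hn1 le_rfl
    rw [hc]; exact hfix _ _ _ hn
  have hx2 : x ∈ F (Nat.factorial N) := by
    rcases le_total N n with h | h
    · have := hN n h
      simp only [OrderHom.coe_mk] at this
      rw [this]; exact hx
    · exact hmono h hx
  exact (hmem _ _).mp hx2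
end

section
/- Let K be an abelian group and φ ∈ Aut(K), and suppose there is a finite subset R₀ ⊆ K such that K is generated as a group by {φⁱ(r) : i ∈ ℤ, r ∈ R₀}. Then the set of periodic points P_φ = {a ∈ K : φⁿ(a) = a for some n ≥ 1} is a finitely generated subgroup of K, and φ(P_φ) = P_φ. -/
section PeriodicAux

variable {K : Type*} [CommGroup K]

private lemma mulAut_pow_fixed (e : MulAut K) {a : K} (h : e a = a) :
    ∀ k : ℕ, (e ^ k) a = a := by
  intro k
  induction k with
  | zero => rfl
  | succ k ih => rw [pow_succ, MulAut.mul_apply, h, ih]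

private lemma mulAut_zpow_fixed (e : MulAut K) {a : K} (h : e a = a) :
    ∀ i : ℤ, (e ^ i) a = a := by
  intro i
  obtain ⟨k, rfl | rfl⟩ := Int.eq_nat_or_neg i
  · rw [zpow_natCast]; exact mulAut_pow_fixed e h k
  · apply (e ^ (k : ℤ)).injective
    rw [← MulAut.mul_apply, ← zpow_add, add_neg_cancel, zpow_zero, zpow_natCast,
      mulAut_pow_fixed e h k]
    rfl

end PeriodicAux

/-- Let `K` be an abelian group (written multiplicatively), `φ` an automorphism
of `K`, and suppose `K` is generated by `{φⁱ(r) : i ∈ ℤ, r ∈ R₀}` for some finite `R₀ ⊆ K`.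
Then the set `P_φ` of periodic points of `φ` is (the underlying set of) a finitely generated
subgroup of `K`, and `φ(P_φ) = P_φ`. -/
theorem periodicPoints_fg_and_invariant
    {K : Type*} [CommGroup K] (φ : MulAut K) (R₀ : Set K) (hR₀ : R₀.Finite)
    (hgen : Subgroup.closure {x : K | ∃ (i : ℤ) (r : K), r ∈ R₀ ∧ x = (φ ^ i) r} = ⊤) :
    ∃ P : Subgroup K,
      (P : Set K) = {a : K | ∃ n : ℕ, 1 ≤ n ∧ (φ ^ n) a = a} ∧
      P.FG ∧ ⇑φ '' (P : Set K) = (P : Set K) := by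
  classical
  set S : Set K := {a : K | ∃ n : ℕ, 1 ≤ n ∧ (φ ^ n) a = a} with hSdef
  -- S is invariant under all integer powers of φ
  have hinv : ∀ (i : ℤ) {a : K}, a ∈ S → (φ ^ i) a ∈ S := by
    rintro i a ⟨n, hn, ha⟩
    refine ⟨n, hn, ?_⟩
    have hcomm : (φ ^ (n : ℤ)) ((φ ^ i) a) = (φ ^ i) ((φ ^ (n : ℤ)) a) := by
      rw [← MulAut.mul_apply, ← MulAut.mul_apply, ← zpow_add, ← zpow_add, add_comm]
    rw [← zpow_natCast φ n, hcomm, zpow_natCast φ n, ha]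
  -- the subgroup of periodic points
  let P : Subgroup K :=
    { carrier := S
      one_mem' := ⟨1, le_refl _, map_one _⟩
      mul_mem' := by
        rintro a b ⟨n, hn, ha⟩ ⟨m, hm, hb⟩
        refine ⟨n * m, Nat.one_le_iff_ne_zero.2 (by positivity), ?_⟩
        have h1 : (φ ^ (n * m)) a = a := by
          rw [pow_mul]; exact mulAut_pow_fixed _ ha m
        have h2 : (φ ^ (n * m)) b = b := by
          rw [mul_comm n m, pow_mul]; exact mulAut_pow_fixed _ hb n
        rw [map_mul, h1, h2]
      inv_mem' := by
        rintro a ⟨n, hn, ha⟩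
        exact ⟨n, hn, by rw [map_inv, ha]⟩ }
  refine ⟨P, rfl, ?_, ?_⟩
  · -- finite generation
    let conv : MulAut K →* (Additive K ≃ₗ[ℤ] Additive K) :=
      MonoidHom.mk' (fun e => (MulEquiv.toAdditive e).toIntLinearEquiv)
        (fun a b => by ext x; rfl)
    let F : Multiplicative ℤ →* Module.End ℤ (Additive K) :=
      (LinearEquiv.automorphismGroup.toLinearMapMonoidHom).comp ((zpowersHom _) (conv φ))
    have hF : ∀ (i : ℤ) (x : K),
        F (Multiplicative.ofAdd i) (Additive.ofMul x) = Additive.ofMul ((φ ^ i) x) := by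
      intro i x
      show (conv φ ^ i) (Additive.ofMul x) = Additive.ofMul ((φ ^ i) x)
      rw [← map_zpow]
      rfl
    let algHom : LaurentPolynomial ℤ →ₐ[ℤ] Module.End ℤ (Additive K) :=
      AddMonoidAlgebra.lift ℤ (Module.End ℤ (Additive K)) ℤ F
    letI modInst : Module (LaurentPolynomial ℤ) (Additive K) :=
      Module.compHom _ algHom.toRingHom
    have hsm : ∀ (c : LaurentPolynomial ℤ) (a : Additive K), c • a = algHom c a :=
      fun _ _ => rfl
    have hsingle : ∀ (i z : ℤ) (x : K),
        (AddMonoidAlgebra.single i z : LaurentPolynomial ℤ) • (Additive.ofMul x)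
          = z • (Additive.ofMul ((φ ^ i) x)) := by
      intro i z x
      rw [hsm, AddMonoidAlgebra.lift_single, LinearMap.smul_apply, hF]
    -- the submodule of periodic points
    let N : Submodule (LaurentPolynomial ℤ) (Additive K) :=
      { carrier := {a : Additive K | Additive.toMul a ∈ S}
        add_mem' := fun {a b} ha hb => P.mul_mem ha hb
        zero_mem' := P.one_mem
        smul_mem' := by
          intro c x hx
          induction c using AddMonoidAlgebra.induction with
          | zero =>
            rw [zero_smul]
            exact P.one_mem
          | single_add i z f hif hz ih =>
            rw [add_smul]
            have h1 : (AddMonoidAlgebra.single i z : LaurentPolynomial ℤ) • x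
                ∈ {a : Additive K | Additive.toMul a ∈ S} := by
              have hx' : x = Additive.ofMul (Additive.toMul x) := rfl
              rw [hx', hsingle]
              exact P.zpow_mem (hinv i hx) z
            exact P.mul_mem h1 ih }
    -- K is a finite module over the Laurent polynomial ring
    haveI hfin : Module.Finite (LaurentPolynomial ℤ) (Additive K) := by
      refine ⟨⟨(hR₀.image Additive.ofMul).toFinset, ?_⟩⟩
      rw [eq_top_iff]
      intro x _
      have hx : Additive.toMul x ∈
          Subgroup.closure {x : K | ∃ (i : ℤ) (r : K), r ∈ R₀ ∧ x = (φ ^ i) r} := by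
        rw [hgen]; trivial
      set Q : Submodule (LaurentPolynomial ℤ) (Additive K) :=
        Submodule.span (LaurentPolynomial ℤ)
          ((hR₀.image Additive.ofMul).toFinset : Set (Additive K)) with hQdef
      have hle : Subgroup.closure {x : K | ∃ (i : ℤ) (r : K), r ∈ R₀ ∧ x = (φ ^ i) r}
          ≤ AddSubgroup.toSubgroup' Q.toAddSubgroup := by
        rw [Subgroup.closure_le]
        rintro _ ⟨i, r, hr, rfl⟩
        show Additive.ofMul ((φ ^ i) r) ∈ Q
        have h1 : (AddMonoidAlgebra.single i 1 : LaurentPolynomial ℤ) • (Additive.ofMul r)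
            ∈ Q := Q.smul_mem _ (Submodule.subset_span (by simp [hr]))
        rwa [hsingle, one_smul] at h1
      exact hle hx
    -- Noetherianity
    haveI := LaurentPolynomial.isLocalization (R := ℤ)
    haveI hnr : IsNoetherianRing (LaurentPolynomial ℤ) :=
      IsLocalization.isNoetherianRing (Submonoid.powers (Polynomial.X : Polynomial ℤ)) _
        inferInstance
    haveI : IsNoetherian (LaurentPolynomial ℤ) (Additive K) :=
      isNoetherian_of_isNoetherianRing_of_finite _ _
    obtain ⟨T, hT⟩ : N.FG := IsNoetherian.noetherian N
    -- the orbit set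
    let O : Set K := {x | ∃ t ∈ T, ∃ i : ℤ, x = (φ ^ i) (Additive.toMul t)}
    have hTS : ∀ t ∈ T, Additive.toMul t ∈ S := by
      intro t ht
      have : t ∈ N := hT ▸ Submodule.subset_span ht
      exact this
    have hOS : O ⊆ S := by
      rintro _ ⟨t, ht, i, rfl⟩
      exact hinv i (hTS t ht)
    have hOfin : O.Finite := by
      have hsub : O ⊆ ⋃ t ∈ T, {x | ∃ i : ℤ, x = (φ ^ i) (Additive.toMul t)} := by
        rintro x ⟨t, ht, i, rfl⟩
        exact Set.mem_biUnion ht ⟨i, rfl⟩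
      refine Set.Finite.subset (Set.Finite.biUnion T.finite_toSet fun t ht => ?_) hsub
      obtain ⟨n, hn, hfix⟩ := hTS t ht
      have horb : {x | ∃ i : ℤ, x = (φ ^ i) (Additive.toMul t)}
          ⊆ (fun k : ℕ => (φ ^ k) (Additive.toMul t)) '' Set.Iio n := by
        rintro x ⟨i, rfl⟩
        have hn' : (0:ℤ) < (n:ℤ) := by exact_mod_cast hn
        refine ⟨(i % n).toNat, ?_, ?_⟩
        · have h1 : i % (n : ℤ) < n := Int.emod_lt_of_pos i hn'
          have h2 : (0:ℤ) ≤ i % n := Int.emod_nonneg i hn'.ne'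
          simp only [Set.mem_Iio]
          omega
        · have h2 : (0:ℤ) ≤ i % n := Int.emod_nonneg i hn'.ne'
          have h3 : ((i % (n:ℤ)).toNat : ℤ) = i % n := Int.toNat_of_nonneg h2
          have h4 : i = i % n + (n : ℤ) * (i / n) := by
            have := Int.mul_ediv_add_emod i n
            omega
          have h5 : (φ ^ ((n:ℤ) * (i / n))) (Additive.toMul t) = Additive.toMul t := by
            rw [zpow_mul, zpow_natCast]
            exact mulAut_zpow_fixed _ hfix _
          show (φ ^ (i % (n:ℤ)).toNat) (Additive.toMul t) = (φ ^ i) (Additive.toMul t)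
          rw [← zpow_natCast φ, h3]
          conv_rhs => rw [h4, zpow_add, MulAut.mul_apply, h5]
      exact Set.Finite.subset ((Set.finite_Iio n).image _) horb
    -- the additive closure of the orbit is a submodule
    set O' : Set (Additive K) := Additive.ofMul '' O with hO'def
    have hOgen : ∀ (i z : ℤ), ∀ x ∈ AddSubgroup.closure O',
        (AddMonoidAlgebra.single i z : LaurentPolynomial ℤ) • x ∈ AddSubgroup.closure O' := by
      intro i z x hx
      have hmap : AddSubgroup.closure O' ≤ AddSubgroup.comap
          (algHom (AddMonoidAlgebra.single i z)).toAddMonoidHom (AddSubgroup.closure O') := by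
        rw [AddSubgroup.closure_le]
        rintro _ ⟨y, ⟨t, ht, j, rfl⟩, rfl⟩
        show algHom (AddMonoidAlgebra.single i z)
            (Additive.ofMul ((φ ^ j) (Additive.toMul t))) ∈ AddSubgroup.closure O'
        rw [← hsm, hsingle]
        refine AddSubgroup.zsmul_mem _ (AddSubgroup.subset_closure ?_) z
        refine ⟨(φ ^ (i + j)) (Additive.toMul t), ⟨t, ht, i + j, rfl⟩, ?_⟩
        rw [zpow_add, MulAut.mul_apply]
      have hres := hmap hx
      rw [AddSubgroup.mem_comap] at hres
      rw [hsm]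
      exact hres
    have hQ : ∀ (c : LaurentPolynomial ℤ), ∀ x ∈ AddSubgroup.closure O',
        c • x ∈ AddSubgroup.closure O' := by
      intro c
      induction c using AddMonoidAlgebra.induction with
      | zero =>
        intro x hx
        rw [zero_smul]
        exact AddSubgroup.zero_mem _
      | single_add i z f hif hz ih =>
        intro x hx
        rw [add_smul]
        exact AddSubgroup.add_mem _ (hOgen i z x hx) (ih x hx)
    let Q : Submodule (LaurentPolynomial ℤ) (Additive K) :=
      { (AddSubgroup.closure O').toAddSubmonoid with
        smul_mem' := fun c {x} hx => hQ c x hx }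
    have hNQ : ∀ x, x ∈ N → x ∈ AddSubgroup.closure O' := by
      intro x hx
      rw [← hT] at hx
      have hle : Submodule.span (LaurentPolynomial ℤ) (T : Set (Additive K)) ≤ Q := by
        apply Submodule.span_le.2
        intro t ht
        refine AddSubgroup.subset_closure ⟨Additive.toMul t, ⟨t, ht, 0, ?_⟩, rfl⟩
        rw [zpow_zero]
        rfl
      exact hle hx
    -- conclude finite generation
    rw [Subgroup.fg_iff_add_fg, AddSubgroup.fg_iff]
    refine ⟨O', le_antisymm ?_ ?_, hOfin.image _⟩
    · rw [AddSubgroup.closure_le]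
      rintro _ ⟨y, hy, rfl⟩
      exact hOS hy
    · intro x hx
      exact hNQ x hx
  · -- invariance
    ext x
    constructor
    · rintro ⟨a, ⟨n, hn, ha⟩, rfl⟩
      refine ⟨n, hn, ?_⟩
      rw [← MulAut.mul_apply, ← pow_succ, pow_succ', MulAut.mul_apply, ha]
    · rintro ⟨n, hn, hx⟩
      refine ⟨φ⁻¹ x, ?_, by simp⟩
      refine ⟨n, hn, ?_⟩
      apply φ.injective
      have h7 : φ * φ ^ n * φ⁻¹ = φ ^ n := by group
      have h6 : φ ((φ ^ n) (φ⁻¹ x)) = (φ ^ n) x := by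
        rw [← MulAut.mul_apply, ← MulAut.mul_apply, h7]
      rw [h6, hx]
      simp

-- #print axioms check
end

section
/- Let Q ∈ GL_n(ℚ), let K be the additive subgroup of ℚⁿ generated by ⋃_{i∈ℤ} Qⁱ(ℤⁿ), and let G = K ⋊_Q ℤ, where the generator t of ℤ acts on K by Q. Let P_Q = {v ∈ K : Qᵐv = v for some m ≥ 1} (a finitely generated group). Let R be a finite symmetric subset of K such that S = {(r,1) : r ∈ R} ∪ {(0,t),(0,t⁻¹)} generates G, and let X be a finite symmetric generating set of P_Q containing the identity. Then P_Q is at most polynomially distorted in G: there exist constants C and d such that Δ_G^{P_Q}(r) ≤ C·rᵈ for all r ≥ 1. -/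
open scoped Pointwise

noncomputable section

/-- The generating set `⋃_{i ∈ ℤ} Qⁱ(ℤⁿ) ⊆ ℚⁿ`. -/
def KQgen (n : ℕ) (Q : GL (Fin n) ℚ) : Set (Fin n → ℚ) :=
  {x | ∃ (i : ℤ) (v : Fin n → ℤ),
    x = ((Q ^ i : GL (Fin n) ℚ) : Matrix (Fin n) (Fin n) ℚ).mulVec (fun j => (v j : ℚ))}

/-- `K = ⟨Qⁱ(ℤⁿ) : i ∈ ℤ⟩`, as an additive subgroup of `ℚⁿ`. -/
def KQ (n : ℕ) (Q : GL (Fin n) ℚ) : AddSubgroup (Fin n → ℚ) :=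
  AddSubgroup.closure (KQgen n Q)

/-- `Q` as an additive automorphism of `ℚⁿ`. -/
def QAddAut (n : ℕ) (Q : GL (Fin n) ℚ) : AddAut (Fin n → ℚ) where
  toFun x := ((Q : Matrix (Fin n) (Fin n) ℚ)).mulVec x
  invFun x := ((Q⁻¹ : GL (Fin n) ℚ) : Matrix (Fin n) (Fin n) ℚ).mulVec x
  left_inv x := by
    show ((Q⁻¹ : GL (Fin n) ℚ) : Matrix (Fin n) (Fin n) ℚ).mulVec
      (((Q : Matrix (Fin n) (Fin n) ℚ)).mulVec x) = x
    rw [Matrix.mulVec_mulVec, ← Units.val_mul, inv_mul_cancel, Units.val_one,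
      Matrix.one_mulVec]
  right_inv x := by
    show ((Q : Matrix (Fin n) (Fin n) ℚ)).mulVec
      (((Q⁻¹ : GL (Fin n) ℚ) : Matrix (Fin n) (Fin n) ℚ).mulVec x) = x
    rw [Matrix.mulVec_mulVec, ← Units.val_mul, mul_inv_cancel, Units.val_one,
      Matrix.one_mulVec]
  map_add' x y := Matrix.mulVec_add _ x y

/-- `Q` as a multiplicative automorphism of `Multiplicative ℚⁿ`. -/
def QMulAut (n : ℕ) (Q : GL (Fin n) ℚ) : MulAut (Multiplicative (Fin n → ℚ)) :=
  AddEquiv.toMultiplicative (QAddAut n Q)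

lemma QMulAut_apply (n : ℕ) (Q : GL (Fin n) ℚ) (y : Multiplicative (Fin n → ℚ)) :
    Multiplicative.toAdd (QMulAut n Q y) =
      ((Q : Matrix (Fin n) (Fin n) ℚ)).mulVec (Multiplicative.toAdd y) := rfl

lemma QMulAut_inv_apply (n : ℕ) (Q : GL (Fin n) ℚ) (y : Multiplicative (Fin n → ℚ)) :
    Multiplicative.toAdd ((QMulAut n Q)⁻¹ y) =
      ((Q⁻¹ : GL (Fin n) ℚ) : Matrix (Fin n) (Fin n) ℚ).mulVec (Multiplicative.toAdd y) := rfl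

lemma QMulAut_zpow (n : ℕ) (Q : GL (Fin n) ℚ) (i : ℤ) :
    ∀ y : Multiplicative (Fin n → ℚ),
      Multiplicative.toAdd ((QMulAut n Q ^ i) y) =
        ((Q ^ i : GL (Fin n) ℚ) : Matrix (Fin n) (Fin n) ℚ).mulVec (Multiplicative.toAdd y) := by
  induction i using Int.induction_on with
  | zero => intro y; simp [Matrix.one_mulVec]
  | succ m ih =>
      intro y
      rw [zpow_add_one, MulAut.mul_apply, ih, QMulAut_apply, Matrix.mulVec_mulVec,
        ← Units.val_mul, ← zpow_add_one]
  | pred m ih =>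
      intro y
      rw [zpow_sub_one, MulAut.mul_apply, ih, QMulAut_inv_apply, Matrix.mulVec_mulVec,
        ← Units.val_mul, ← zpow_sub_one]

lemma KQ_smul (n : ℕ) (Q : GL (Fin n) ℚ) (i : ℤ) {x : Fin n → ℚ} (hx : x ∈ KQ n Q) :
    ((Q ^ i : GL (Fin n) ℚ) : Matrix (Fin n) (Fin n) ℚ).mulVec x ∈ KQ n Q := by
  induction hx using AddSubgroup.closure_induction with
  | mem x hx =>
      obtain ⟨j, v, rfl⟩ := hx
      exact AddSubgroup.subset_closure
        ⟨i + j, v, by rw [Matrix.mulVec_mulVec, ← Units.val_mul, ← zpow_add]⟩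
  | zero => simpa [Matrix.mulVec_zero] using (KQ n Q).zero_mem
  | add x y hx hy ihx ihy =>
      rw [Matrix.mulVec_add]
      exact add_mem ihx ihy
  | neg x hx ihx =>
      rw [Matrix.mulVec_neg]
      exact neg_mem ihx

/-- The ambient group `ℚⁿ ⋊_Q ℤ`. -/
abbrev QAmbient (n : ℕ) (Q : GL (Fin n) ℚ) :=
  Multiplicative (Fin n → ℚ)
    ⋊[zpowersHom (MulAut (Multiplicative (Fin n → ℚ))) (QMulAut n Q)] Multiplicative ℤ

/-- The group `G = K ⋊_Q ℤ` where `K = ⟨Qⁱ(ℤⁿ) : i ∈ ℤ⟩`, realised as the subgroup of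
`ℚⁿ ⋊_Q ℤ` of elements whose first coordinate lies in `K`. -/
def GQ (n : ℕ) (Q : GL (Fin n) ℚ) : Subgroup (QAmbient n Q) where
  carrier := {g | Multiplicative.toAdd g.left ∈ KQ n Q}
  one_mem' := by simpa using (KQ n Q).zero_mem
  mul_mem' := by
    intro a b ha hb
    simp only [Set.mem_setOf_eq, SemidirectProduct.mul_left, toAdd_mul] at *
    refine add_mem ha ?_
    rw [zpowersHom_apply, QMulAut_zpow]
    exact KQ_smul n Q _ hb
  inv_mem' := by
    intro a ha
    simp only [Set.mem_setOf_eq, SemidirectProduct.inv_left, zpowersHom_apply, toAdd_inv] at *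
    rw [QMulAut_zpow, toAdd_inv, Matrix.mulVec_neg]
    exact neg_mem (KQ_smul n Q _ ha)

private lemma mulVec_pow_fix {n : ℕ} (P : GL (Fin n) ℚ) {x : Fin n → ℚ}
    (hx : (P : Matrix (Fin n) (Fin n) ℚ).mulVec x = x) :
    ∀ l : ℕ, ((P ^ l : GL (Fin n) ℚ) : Matrix (Fin n) (Fin n) ℚ).mulVec x = x := by
  intro l
  induction l with
  | zero => simp [Matrix.one_mulVec]
  | succ l ih => rw [pow_succ, Units.val_mul, ← Matrix.mulVec_mulVec, hx, ih]

/-- The periodic points `P_Q = {v ∈ K : Qᵐv = v for some m ≥ 1}`, as a subgroup of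
`ℚⁿ ⋊_Q ℤ` (sitting inside the first coordinate). -/
def PQ (n : ℕ) (Q : GL (Fin n) ℚ) : Subgroup (QAmbient n Q) where
  carrier := {g | Multiplicative.toAdd g.left ∈ KQ n Q ∧ g.right = 1 ∧
    ∃ m : ℕ, 1 ≤ m ∧ ((Q ^ m : GL (Fin n) ℚ) : Matrix (Fin n) (Fin n) ℚ).mulVec
      (Multiplicative.toAdd g.left) = Multiplicative.toAdd g.left}
  one_mem' := by
    refine ⟨by simpa using (KQ n Q).zero_mem, rfl, 1, le_refl 1, ?_⟩
    simp
  mul_mem' := by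
    rintro a b ⟨haK, har, m₁, hm₁, hfa⟩ ⟨hbK, hbr, m₂, hm₂, hfb⟩
    have hab : Multiplicative.toAdd (a * b).left =
        Multiplicative.toAdd a.left + Multiplicative.toAdd b.left := by
      rw [SemidirectProduct.mul_left, har, map_one, MulAut.one_apply, toAdd_mul]
    refine ⟨by rw [hab]; exact add_mem haK hbK,
      by rw [SemidirectProduct.mul_right, har, hbr, mul_one],
      m₁ * m₂, Nat.one_le_iff_ne_zero.2 (by positivity), ?_⟩
    have h1 : ((Q ^ (m₁ * m₂) : GL (Fin n) ℚ) : Matrix (Fin n) (Fin n) ℚ).mulVec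
        (Multiplicative.toAdd a.left) = Multiplicative.toAdd a.left := by
      rw [pow_mul]; exact mulVec_pow_fix (Q ^ m₁) hfa m₂
    have h2 : ((Q ^ (m₁ * m₂) : GL (Fin n) ℚ) : Matrix (Fin n) (Fin n) ℚ).mulVec
        (Multiplicative.toAdd b.left) = Multiplicative.toAdd b.left := by
      rw [mul_comm, pow_mul]; exact mulVec_pow_fix (Q ^ m₂) hfb m₁
    rw [hab, Matrix.mulVec_add, h1, h2]
  inv_mem' := by
    rintro a ⟨haK, har, m, hm, hfa⟩
    have hleft : Multiplicative.toAdd (a⁻¹).left = -(Multiplicative.toAdd a.left) := by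
      rw [SemidirectProduct.inv_left, har, inv_one, map_one, MulAut.one_apply, toAdd_inv]
    refine ⟨by rw [hleft]; exact neg_mem haK,
      by rw [SemidirectProduct.inv_right, har, inv_one], m, hm, ?_⟩
    rw [hleft, Matrix.mulVec_neg, hfa]

/-- The element `t = (0, t)` of `G = K ⋊_Q ℤ`. -/
def tQ (n : ℕ) (Q : GL (Fin n) ℚ) : ↥(GQ n Q) :=
  ⟨⟨1, Multiplicative.ofAdd (1 : ℤ)⟩, by
    show Multiplicative.toAdd (1 : Multiplicative (Fin n → ℚ)) ∈ KQ n Q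
    rw [toAdd_one]; exact (KQ n Q).zero_mem⟩

/-- The word length of `g` with respect to a generating set `S` (containing the identity):
the least `n` with `g ∈ Sⁿ`. -/
noncomputable def wordLength {G : Type*} [Group G] (S : Set G) (g : G) : ℕ :=
  sInf {n : ℕ | g ∈ S ^ n}

/-- The distortion function `Δ_G^H(r) = max { |h|_X : h ∈ H, |h|_S ≤ r }` of a subgroup `H`
(with finite generating set `X`) inside `G` (with finite generating set `S`). -/
noncomputable def distortion {G : Type*} [Group G] (H : Subgroup G) (S X : Set G) (r : ℕ) : ℕ :=
  sSup (wordLength X '' {h : G | h ∈ H ∧ wordLength S h ≤ r})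


section General

variable {G : Type*} [Group G]

lemma exists_mem_pow_of_mem_closure {s : Set G} (hs : s⁻¹ = s)
    {g : G} (hg : g ∈ Subgroup.closure s) : ∃ k : ℕ, g ∈ s ^ k := by
  induction hg using Subgroup.closure_induction with
  | mem x hx => exact ⟨1, by simpa [pow_one] using hx⟩
  | one => exact ⟨0, by simp [pow_zero, Set.mem_one]⟩
  | mul x y hx hy ihx ihy =>
      obtain ⟨a, ha⟩ := ihx; obtain ⟨b, hb⟩ := ihy
      exact ⟨a + b, by rw [pow_add]; exact Set.mul_mem_mul ha hb⟩
  | inv x hx ihx =>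
      obtain ⟨a, ha⟩ := ihx
      refine ⟨a, ?_⟩
      rw [← hs, inv_pow]
      simpa using ha

end General

section NormQ

variable {n : ℕ}

/-- crude ℚ-valued "norm" (sum of abs of coordinates) -/
def normQ (x : Fin n → ℚ) : ℚ := ∑ j, |x j|

/-- crude matrix bound -/
def matB (P : Matrix (Fin n) (Fin n) ℚ) : ℚ := ∑ j, ∑ k, |P j k|

lemma normQ_nonneg (x : Fin n → ℚ) : 0 ≤ normQ x :=
  Finset.sum_nonneg fun _ _ => abs_nonneg _

lemma matB_nonneg (P : Matrix (Fin n) (Fin n) ℚ) : 0 ≤ matB P :=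
  Finset.sum_nonneg fun _ _ => Finset.sum_nonneg fun _ _ => abs_nonneg _

lemma abs_le_normQ (x : Fin n → ℚ) (j : Fin n) : |x j| ≤ normQ x := by
  exact Finset.single_le_sum (f := fun k => |x k|) (fun _ _ => abs_nonneg _) (Finset.mem_univ j)

lemma normQ_add_le (x y : Fin n → ℚ) : normQ (x + y) ≤ normQ x + normQ y := by
  unfold normQ
  rw [← Finset.sum_add_distrib]
  exact Finset.sum_le_sum fun j _ => abs_add_le _ _

lemma normQ_neg (x : Fin n → ℚ) : normQ (-x) = normQ x := by
  simp [normQ]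

lemma normQ_smul (c : ℚ) (x : Fin n → ℚ) : normQ (c • x) = |c| * normQ x := by
  simp [normQ, Finset.mul_sum, abs_mul]

lemma normQ_mulVec_le (P : Matrix (Fin n) (Fin n) ℚ) (x : Fin n → ℚ) :
    normQ (P.mulVec x) ≤ matB P * normQ x := by
  rw [normQ, matB, Finset.sum_mul]
  refine Finset.sum_le_sum fun j _ => ?_
  calc |P.mulVec x j| = |∑ k, P j k * x k| := by rw [Matrix.mulVec, dotProduct]
    _ ≤ ∑ k, |P j k * x k| := Finset.abs_sum_le_sum_abs _ _
    _ ≤ ∑ k, |P j k| * normQ x := by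
        refine Finset.sum_le_sum fun k _ => ?_
        rw [abs_mul]
        exact mul_le_mul_of_nonneg_left (abs_le_normQ x k) (abs_nonneg _)
    _ = (∑ k, |P j k|) * normQ x := by rw [Finset.sum_mul]

lemma normQ_sum_le {ι : Type*} (s : Finset ι) (f : ι → Fin n → ℚ) :
    normQ (∑ i ∈ s, f i) ≤ ∑ i ∈ s, normQ (f i) := by
  classical
  induction s using Finset.induction with
  | empty => simp [normQ]
  | insert _ _ hx ih =>
      rw [Finset.sum_insert hx, Finset.sum_insert hx]
      exact le_trans (normQ_add_le _ _) (by linarith)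

lemma normQ_listSum_le (l : List (Fin n → ℚ)) : normQ l.sum ≤ (l.map normQ).sum := by
  induction l with
  | nil => simp [normQ]
  | cons a l ih =>
      simp only [List.sum_cons, List.map_cons]
      exact le_trans (normQ_add_le _ _) (by linarith)

lemma sum_mulVecQ {ι : Type*} (s : Finset ι) (M : ι → Matrix (Fin n) (Fin n) ℚ)
    (v : Fin n → ℚ) : (∑ i ∈ s, M i).mulVec v = ∑ i ∈ s, (M i).mulVec v := by
  classical
  induction s using Finset.induction with
  | empty => simp [Matrix.zero_mulVec]
  | insert _ _ hx ih => rw [Finset.sum_insert hx, Finset.sum_insert hx, Matrix.add_mulVec, ih]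

end NormQ

section Binomial

variable {n : ℕ}

lemma natCast_mul_mulVec (c : ℕ) (C : Matrix (Fin n) (Fin n) ℚ) (y : Fin n → ℚ) :
    (C * (c : Matrix (Fin n) (Fin n) ℚ)).mulVec y = (c : ℚ) • C.mulVec y := by
  have h1 : C * (c : Matrix (Fin n) (Fin n) ℚ) = c • C := by
    rw [← (Nat.cast_commute c C).eq, ← nsmul_eq_mul]
  rw [h1, Matrix.smul_mulVec, Nat.cast_smul_eq_nsmul]

lemma one_add_pow_mulVec (B : Matrix (Fin n) (Fin n) ℚ) (q : ℕ) (y : Fin n → ℚ) :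
    ((1 + B) ^ q).mulVec y
      = ∑ m ∈ Finset.range (q + 1), (q.choose m : ℚ) • (B ^ m).mulVec y := by
  rw [add_comm (1 : Matrix (Fin n) (Fin n) ℚ) B, (Commute.one_right B).add_pow, sum_mulVecQ]
  refine Finset.sum_congr rfl fun m hm => ?_
  rw [one_pow, mul_one, natCast_mul_mulVec]

lemma choose_le_q_add_one_pow (q m e : ℕ) (hm : m ≤ e) :
    (q.choose m : ℚ) ≤ ((q : ℚ) + 1) ^ e := by
  have h1 : (q.choose m : ℚ) ≤ (q : ℚ) ^ m / (m.factorial : ℚ) := Nat.choose_le_pow_div m q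
  have h2 : (q : ℚ) ^ m / (m.factorial : ℚ) ≤ (q : ℚ) ^ m := by
    apply div_le_self (by positivity)
    exact_mod_cast Nat.one_le_iff_ne_zero.mpr m.factorial_ne_zero
  have h3 : (q : ℚ) ^ m ≤ ((q : ℚ) + 1) ^ m :=
    pow_le_pow_left₀ (by positivity) (by linarith) m
  have h4 : ((q : ℚ) + 1) ^ m ≤ ((q : ℚ) + 1) ^ e :=
    pow_le_pow_right₀ (by linarith) hm
  linarith

lemma binom_growth (B : Matrix (Fin n) (Fin n) ℚ) (e : ℕ) (c : ℚ) (hc0 : 0 ≤ c)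
    (hc : ∀ t, t < e → matB (B ^ t) ≤ c)
    (q : ℕ) (y : Fin n → ℚ) (hy : (B ^ e).mulVec y = 0) :
    normQ (((1 + B) ^ q).mulVec y) ≤ (e : ℚ) * c * ((q : ℚ) + 1) ^ e * normQ y := by
  have hz : ∀ m, e ≤ m → (B ^ m).mulVec y = 0 := by
    intro m hm
    have hBm : B ^ m = B ^ (m - e) * B ^ e := by rw [← pow_add]; congr 1; omega
    rw [hBm, ← Matrix.mulVec_mulVec, hy, Matrix.mulVec_zero]
  set K : ℚ := c * ((q : ℚ) + 1) ^ e * normQ y with hK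
  have hK0 : 0 ≤ K := mul_nonneg (mul_nonneg hc0 (by positivity)) (normQ_nonneg y)
  rw [one_add_pow_mulVec]
  calc normQ (∑ m ∈ Finset.range (q + 1), (q.choose m : ℚ) • (B ^ m).mulVec y)
      ≤ ∑ m ∈ Finset.range (q + 1), normQ ((q.choose m : ℚ) • (B ^ m).mulVec y) :=
        normQ_sum_le _ _
    _ ≤ ∑ m ∈ Finset.range (q + 1), (if m < e then K else 0) := by
        refine Finset.sum_le_sum fun m hm => ?_
        by_cases hme : m < e
        · rw [if_pos hme, normQ_smul]
          have h1 : normQ ((B ^ m).mulVec y) ≤ c * normQ y :=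
            le_trans (normQ_mulVec_le _ _)
              (mul_le_mul_of_nonneg_right (hc m hme) (normQ_nonneg _))
          have h2 : |(q.choose m : ℚ)| ≤ ((q : ℚ) + 1) ^ e := by
            rw [abs_of_nonneg (by positivity)]
            exact choose_le_q_add_one_pow q m e hme.le
          calc |(q.choose m : ℚ)| * normQ ((B ^ m).mulVec y)
              ≤ ((q : ℚ) + 1) ^ e * (c * normQ y) := by
                apply mul_le_mul h2 h1 (normQ_nonneg _) (by positivity)
            _ = K := by ring
        · rw [if_neg hme, hz m (not_lt.mp hme), smul_zero]
          simp [normQ]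
    _ = ∑ m ∈ (Finset.range (q + 1)).filter (fun m => m < e), K := by
        rw [Finset.sum_filter]
    _ ≤ (e : ℚ) * K := by
        rw [Finset.sum_const, nsmul_eq_mul]
        apply mul_le_mul_of_nonneg_right _ hK0
        have : (Finset.range (q + 1)).filter (fun m => m < e) ⊆ Finset.range e := by
          intro m hm
          simp only [Finset.mem_filter, Finset.mem_range] at *
          exact hm.2
        exact_mod_cast Nat.cast_le.mpr (le_trans (Finset.card_le_card this) (by simp))
    _ = (e : ℚ) * c * ((q : ℚ) + 1) ^ e * normQ y := by rw [hK]; ring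

end Binomial
section Specific

variable (n : ℕ) (Q : GL (Fin n) ℚ)

/-- the matrix of `Q^i` -/
def Amat (i : ℤ) : Matrix (Fin n) (Fin n) ℚ :=
  ((Q ^ i : GL (Fin n) ℚ) : Matrix (Fin n) (Fin n) ℚ)

lemma Amat_zero : Amat n Q 0 = 1 := by simp [Amat]

lemma Amat_add (i j : ℤ) : Amat n Q (i + j) = Amat n Q i * Amat n Q j := by
  rw [Amat, Amat, Amat, zpow_add, Units.val_mul]

lemma Amat_natCast (m : ℕ) : Amat n Q (m : ℤ) = ((Q : Matrix (Fin n) (Fin n) ℚ)) ^ m := by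
  rw [Amat, zpow_natCast, Units.val_pow_eq_pow_val]

/-- left part, additively -/
def lQ (g : ↥(GQ n Q)) : Fin n → ℚ := Multiplicative.toAdd (g : QAmbient n Q).left

/-- right part, additively -/
def rQ (g : ↥(GQ n Q)) : ℤ := Multiplicative.toAdd (g : QAmbient n Q).right

lemma lQ_mul (a b : ↥(GQ n Q)) :
    lQ n Q (a * b) = lQ n Q a + (Amat n Q (rQ n Q a)).mulVec (lQ n Q b) := by
  show Multiplicative.toAdd ((a : QAmbient n Q) * (b : QAmbient n Q)).left = _
  rw [SemidirectProduct.mul_left, toAdd_mul, zpowersHom_apply, QMulAut_zpow]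
  rfl

lemma rQ_mul (a b : ↥(GQ n Q)) : rQ n Q (a * b) = rQ n Q a + rQ n Q b := by
  show Multiplicative.toAdd ((a : QAmbient n Q) * (b : QAmbient n Q)).right = _
  rw [SemidirectProduct.mul_right, toAdd_mul]; rfl

lemma lQ_one : lQ n Q 1 = 0 := rfl

lemma rQ_one : rQ n Q 1 = 0 := rfl

lemma lQ_inv (a : ↥(GQ n Q)) :
    lQ n Q a⁻¹ = -(Amat n Q (-rQ n Q a)).mulVec (lQ n Q a) := by
  show Multiplicative.toAdd ((a : QAmbient n Q)⁻¹).left = _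
  rw [SemidirectProduct.inv_left, zpowersHom_apply, QMulAut_zpow]
  show (Amat n Q (Multiplicative.toAdd (a : QAmbient n Q).right⁻¹)).mulVec
    (Multiplicative.toAdd (a : QAmbient n Q).left⁻¹) = _
  rw [toAdd_inv, toAdd_inv, Matrix.mulVec_neg]
  rfl

lemma rQ_inv (a : ↥(GQ n Q)) : rQ n Q a⁻¹ = -rQ n Q a := by
  show Multiplicative.toAdd ((a : QAmbient n Q)⁻¹).right = _
  rw [SemidirectProduct.inv_right, toAdd_inv]; rfl

lemma eq_of_lQ_rQ (a b : ↥(GQ n Q)) (hl : lQ n Q a = lQ n Q b) (hr : rQ n Q a = rQ n Q b) :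
    a = b := by
  apply Subtype.ext
  apply SemidirectProduct.ext
  · exact Multiplicative.toAdd.injective hl
  · exact Multiplicative.toAdd.injective hr

lemma mem_PQ_iff (h : ↥(GQ n Q)) :
    h ∈ (PQ n Q).subgroupOf (GQ n Q) ↔
      (lQ n Q h ∈ KQ n Q ∧ rQ n Q h = 0 ∧
        ∃ m : ℕ, 1 ≤ m ∧ (Amat n Q (m : ℤ)).mulVec (lQ n Q h) = lQ n Q h) := by
  rw [Subgroup.mem_subgroupOf]
  change (_ ∧ _ ∧ _) ↔ _
  constructor
  · rintro ⟨h1, h2, m, hm, h3⟩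
    refine ⟨h1, by rw [rQ, h2]; rfl, m, hm, ?_⟩
    rw [Amat_natCast]
    rw [Units.val_pow_eq_pow_val] at h3
    exact h3
  · rintro ⟨h1, h2, m, hm, h3⟩
    refine ⟨h1, Multiplicative.toAdd.injective h2, m, hm, ?_⟩
    rw [Units.val_pow_eq_pow_val]
    rw [Amat_natCast] at h3
    exact h3

end Specific
section Period

variable (n : ℕ) (Q : GL (Fin n) ℚ)

lemma Amat_comm_mulVec (i j : ℤ) (x : Fin n → ℚ) :
    (Amat n Q i).mulVec ((Amat n Q j).mulVec x)
      = (Amat n Q j).mulVec ((Amat n Q i).mulVec x) := by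
  rw [Matrix.mulVec_mulVec, Matrix.mulVec_mulVec, ← Amat_add, ← Amat_add, add_comm]

lemma Amat_fix_pow {m : ℕ} {x : Fin n → ℚ} (hx : (Amat n Q (m : ℤ)).mulVec x = x) (l : ℕ) :
    (Amat n Q ((m * l : ℕ) : ℤ)).mulVec x = x := by
  have hfix : ((Q ^ m : GL (Fin n) ℚ) : Matrix (Fin n) (Fin n) ℚ).mulVec x = x := by
    rw [Units.val_pow_eq_pow_val, ← Amat_natCast]; exact hx
  have h2 := mulVec_pow_fix (Q ^ m) hfix l
  rw [← pow_mul, Units.val_pow_eq_pow_val, ← Amat_natCast] at h2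
  exact h2

lemma exists_period (X : Set ↥(GQ n Q)) (hXfin : X.Finite)
    (hX : ∀ x ∈ X, x ∈ (PQ n Q).subgroupOf (GQ n Q)) :
    ∃ M : ℕ, 1 ≤ M ∧ ∀ h ∈ Subgroup.closure X,
      (Amat n Q (M : ℤ)).mulVec (lQ n Q h) = lQ n Q h := by
  classical
  haveI := hXfin.fintype
  choose m hm1 hm2 using fun x : X => ((mem_PQ_iff n Q x.1).mp (hX x.1 x.2)).2.2
  refine ⟨∏ x : X, m x, Finset.one_le_prod' fun x _ => hm1 x, ?_⟩
  set M : ℕ := ∏ x : X, m x with hM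
  let T : Subgroup ↥(GQ n Q) :=
    { carrier := {g | (Amat n Q (M : ℤ)).mulVec (lQ n Q g) = lQ n Q g}
      one_mem' := by simp [lQ_one, Matrix.mulVec_zero]
      mul_mem' := by
        intro a b ha hb
        simp only [Set.mem_setOf_eq] at *
        rw [lQ_mul, Matrix.mulVec_add, ha, Amat_comm_mulVec, hb]
      inv_mem' := by
        intro a ha
        simp only [Set.mem_setOf_eq] at *
        rw [lQ_inv, Matrix.mulVec_neg, Amat_comm_mulVec, ha] }
  intro h hh
  have hle : Subgroup.closure X ≤ T := by
    rw [Subgroup.closure_le]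
    intro x hx
    show (Amat n Q (M : ℤ)).mulVec (lQ n Q x) = lQ n Q x
    have hdvd : m ⟨x, hx⟩ ∣ M := Finset.dvd_prod_of_mem m (Finset.mem_univ (⟨x, hx⟩ : X))
    obtain ⟨l, hl⟩ := hdvd
    rw [hl]
    exact Amat_fix_pow n Q (hm2 ⟨x, hx⟩) l
  exact hle hh

lemma word_decomp (R S : Set ↥(GQ n Q)) (hRK : ∀ g ∈ R, (g : QAmbient n Q).right = 1)
    (hS : S = R ∪ {tQ n Q, (tQ n Q)⁻¹}) :
    ∀ k : ℕ, ∀ g ∈ S ^ k,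
      |rQ n Q g| ≤ (k : ℤ) ∧ ∃ l : List (ℤ × (Fin n → ℚ)), l.length ≤ k ∧
        (∀ p ∈ l, |p.1| ≤ (k : ℤ) ∧ p.2 ∈ lQ n Q '' R) ∧
        lQ n Q g = (l.map (fun p => (Amat n Q p.1).mulVec p.2)).sum := by
  intro k
  induction k with
  | zero =>
      intro g hg
      rw [pow_zero, Set.mem_one] at hg
      subst hg
      exact ⟨by simp [rQ_one], [], by simp, by simp, by simp [lQ_one]⟩
  | succ k ih =>
      intro g hg
      rw [pow_succ] at hg
      obtain ⟨a, ha, b, hb, hab⟩ := Set.mem_mul.mp hg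
      subst hab
      obtain ⟨hra, l, hlen, hmem, hsum⟩ := ih a ha
      rw [hS] at hb
      rcases hb with hbR | hbT
      · have hbr : rQ n Q b = 0 := by rw [rQ, hRK b hbR]; rfl
        refine ⟨by rw [rQ_mul, hbr, add_zero]; omega,
          l ++ [(rQ n Q a, lQ n Q b)], by simp; omega, ?_, ?_⟩
        · intro p hp
          rcases List.mem_append.mp hp with hp | hp
          · obtain ⟨h1, h2⟩ := hmem p hp
            exact ⟨by omega, h2⟩
          · rw [List.mem_singleton] at hp
            subst hp
            exact ⟨by simp; omega, Set.mem_image_of_mem _ hbR⟩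
        · rw [lQ_mul, hsum, List.map_append, List.sum_append]
          simp
      · have hlb : lQ n Q b = 0 ∧ |rQ n Q b| ≤ 1 := by
          rcases hbT with hb | hb
          · subst hb
            constructor
            · rfl
            · show |Multiplicative.toAdd (Multiplicative.ofAdd (1 : ℤ))| ≤ 1
              simp
          · rw [Set.mem_singleton_iff] at hb
            subst hb
            constructor
            · rw [lQ_inv]
              show -(Amat n Q _).mulVec (0 : Fin n → ℚ) = 0
              rw [Matrix.mulVec_zero, neg_zero]
            · rw [rQ_inv]
              show |-(Multiplicative.toAdd (Multiplicative.ofAdd (1 : ℤ)))| ≤ 1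
              simp
        refine ⟨?_, l, le_trans hlen (Nat.le_succ k), ?_, ?_⟩
        · rw [rQ_mul]
          have := abs_add_le (rQ n Q a) (rQ n Q b)
          have h2 := hlb.2
          omega
        · intro p hp
          obtain ⟨h1, h2⟩ := hmem p hp
          exact ⟨by omega, h2⟩
        · rw [lQ_mul, hlb.1, Matrix.mulVec_zero, add_zero, hsum]

end Period
section WordBound

variable (n : ℕ) (Q : GL (Fin n) ℚ)

lemma lQ_mul_of_rQ_zero {a : ↥(GQ n Q)} (b : ↥(GQ n Q)) (ha : rQ n Q a = 0) :
    lQ n Q (a * b) = lQ n Q a + lQ n Q b := by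
  rw [lQ_mul, ha, Amat_zero, Matrix.one_mulVec]

lemma lQ_inv_of_rQ_zero {a : ↥(GQ n Q)} (ha : rQ n Q a = 0) :
    lQ n Q a⁻¹ = -lQ n Q a := by
  rw [lQ_inv, ha, neg_zero, Amat_zero, Matrix.one_mulVec]

lemma rQ_lQ_pow {g : ↥(GQ n Q)} (hg : rQ n Q g = 0) (m : ℕ) :
    rQ n Q (g ^ m) = 0 ∧ lQ n Q (g ^ m) = (m : ℤ) • lQ n Q g := by
  induction m with
  | zero => simp [rQ_one, lQ_one]
  | succ m ih =>
      constructor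
      · rw [pow_succ, rQ_mul, ih.1, hg, add_zero]
      · rw [pow_succ, lQ_mul, ih.1, Amat_zero, Matrix.one_mulVec, ih.2]
        push_cast
        rw [add_smul, one_smul]

lemma rQ_lQ_zpow {g : ↥(GQ n Q)} (hg : rQ n Q g = 0) (a : ℤ) :
    rQ n Q (g ^ a) = 0 ∧ lQ n Q (g ^ a) = a • lQ n Q g := by
  cases a with
  | ofNat m => rw [Int.ofNat_eq_coe, zpow_natCast]; exact rQ_lQ_pow n Q hg m
  | negSucc m =>
      rw [zpow_negSucc]
      obtain ⟨h1, h2⟩ := rQ_lQ_pow n Q hg (m + 1)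
      constructor
      · rw [rQ_inv, h1, neg_zero]
      · rw [lQ_inv_of_rQ_zero n Q h1, h2, Int.negSucc_eq]
        push_cast
        rw [neg_smul]

lemma zpow_mem_pow_set {X : Set ↥(GQ n Q)} (hXsymm : X⁻¹ = X) {g : ↥(GQ n Q)} {k : ℕ}
    (hg : g ∈ X ^ k) (a : ℤ) : g ^ a ∈ X ^ (k * a.natAbs) := by
  have hinv : g⁻¹ ∈ X ^ k := by
    have : g⁻¹ ∈ (X ^ k)⁻¹ := Set.inv_mem_inv.mpr hg
    rwa [← inv_pow, hXsymm] at this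
  cases a with
  | ofNat m =>
      rw [Int.ofNat_eq_coe, zpow_natCast, Int.natAbs_natCast, pow_mul]
      exact Set.pow_mem_pow hg
  | negSucc m =>
      rw [zpow_negSucc, Int.natAbs_negSucc, ← inv_pow, pow_mul]
      exact Set.pow_mem_pow hinv

end WordBound
lemma funct_bound {n : ℕ} (g : (Fin n → ℚ) →ₗ[ℚ] ℚ) (x : Fin n → ℚ) :
    |g x| ≤ (∑ j, |g (Pi.single j 1)|) * normQ x := by
  have hsingle : ∀ j, Pi.single j (x j) = (x j • (Pi.single j 1 : Fin n → ℚ)) := by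
    intro j
    ext k
    simp [Pi.single_apply]
  set C : ℚ := ∑ j, |g (Pi.single j 1)| with hC
  have hle : ∀ j, |g (Pi.single j 1)| ≤ C :=
    fun j => Finset.single_le_sum (f := fun j => |g (Pi.single j 1)|)
      (fun _ _ => abs_nonneg _) (Finset.mem_univ j)
  calc |g x| = |∑ j, x j * g (Pi.single j 1)| := by
        conv_lhs => rw [← Finset.univ_sum_single x]
        rw [map_sum]
        congr 1
        refine Finset.sum_congr rfl fun j _ => ?_
        rw [hsingle j, map_smul, smul_eq_mul]
    _ ≤ ∑ j, |x j * g (Pi.single j 1)| := Finset.abs_sum_le_sum_abs _ _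
    _ ≤ ∑ j, |x j| * C := by
        refine Finset.sum_le_sum fun j _ => ?_
        rw [abs_mul]
        exact mul_le_mul_of_nonneg_left (hle j) (abs_nonneg _)
    _ = C * normQ x := by rw [← Finset.sum_mul, normQ, mul_comm]

section WordBound2

variable (n : ℕ) (Q : GL (Fin n) ℚ)

lemma word_bound_from_norm (X : Set ↥(GQ n Q)) (hXfin : X.Finite) (hXsymm : X⁻¹ = X)
    (hXgen : Subgroup.closure X = (PQ n Q).subgroupOf (GQ n Q)) :
    ∃ C : ℚ, 0 ≤ C ∧ ∀ h ∈ (PQ n Q).subgroupOf (GQ n Q),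
      (wordLength X h : ℚ) ≤ C * normQ (lQ n Q h) := by
  classical
  have hXP : ∀ x ∈ X, x ∈ (PQ n Q).subgroupOf (GQ n Q) := fun x hx =>
    hXgen ▸ Subgroup.subset_closure hx
  have hrQ0 : ∀ h ∈ (PQ n Q).subgroupOf (GQ n Q), rQ n Q h = 0 := fun h hh =>
    ((mem_PQ_iff n Q h).mp hh).2.1
  set L : Submodule ℤ (Fin n → ℚ) := Submodule.span ℤ (lQ n Q '' X) with hL
  have hmemL : ∀ h ∈ (PQ n Q).subgroupOf (GQ n Q), lQ n Q h ∈ L := by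
    intro h hh
    rw [← hXgen] at hh
    have key : rQ n Q h = 0 ∧ lQ n Q h ∈ L := by
      induction hh using Subgroup.closure_induction with
      | mem x hx => exact ⟨hrQ0 x (hXP x hx), Submodule.subset_span (Set.mem_image_of_mem _ hx)⟩
      | one => exact ⟨rQ_one n Q, by rw [lQ_one]; exact L.zero_mem⟩
      | mul a b ha hb iha ihb =>
          exact ⟨by rw [rQ_mul, iha.1, ihb.1, add_zero],
            by rw [lQ_mul_of_rQ_zero n Q b iha.1]; exact L.add_mem iha.2 ihb.2⟩
      | inv a ha iha =>
          exact ⟨by rw [rQ_inv, iha.1, neg_zero],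
            by rw [lQ_inv_of_rQ_zero n Q iha.1]; exact L.neg_mem iha.2⟩
    exact key.2
  haveI : Module.Finite ℤ L := Module.Finite.span_of_finite ℤ (hXfin.image _)
  haveI : NoZeroSMulDivisors ℤ (Fin n → ℚ) := by
    refine ⟨fun {c x} h => ?_⟩
    rw [← Int.cast_smul_eq_zsmul ℚ] at h
    rcases smul_eq_zero.mp h with h | h
    · exact Or.inl (by exact_mod_cast h)
    · exact Or.inr h
  obtain ⟨d, bb⟩ := Module.basisOfFiniteTypeTorsionFree' (R := ℤ) (M := ↥L)
  set vQ : Fin d → (Fin n → ℚ) := fun i => (bb i : Fin n → ℚ) with hvQ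
  have liZ : LinearIndependent ℤ vQ := bb.linearIndependent.map' L.subtype L.ker_subtype
  have liQ : LinearIndependent ℚ vQ := (LinearIndependent.iff_fractionRing ℤ ℚ).mp liZ
  set Vs := Submodule.span ℚ (Set.range vQ) with hVs
  set bV : Module.Basis (Fin d) ℚ ↥Vs := Module.Basis.span liQ with hbV
  obtain ⟨Z, hZ⟩ := Submodule.exists_isCompl Vs
  set pr := Vs.projectionOnto Z hZ with hpr
  set f : Fin d → ((Fin n → ℚ) →ₗ[ℚ] ℚ) := fun i => (bV.coord i).comp pr with hf
  have hdelta : ∀ i j, f i (vQ j) = if j = i then 1 else 0 := by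
    intro i j
    have hmem : vQ j ∈ Vs := Submodule.subset_span (Set.mem_range_self j)
    have h1 : pr (vQ j) = ⟨vQ j, hmem⟩ := Submodule.linearProjOfIsCompl_apply_left hZ ⟨vQ j, hmem⟩
    have h2 : (⟨vQ j, hmem⟩ : ↥Vs) = bV j := by
      apply Subtype.ext
      rw [hbV, Module.Basis.span_apply]
    rw [hf]
    simp only [LinearMap.comp_apply]
    rw [h1, h2, Module.Basis.coord_apply, Module.Basis.repr_self, Finsupp.single_apply]
  set cf : Fin d → ℚ := fun i => ∑ j, |f i (Pi.single j 1)| with hcf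
  have hcf0 : ∀ i, 0 ≤ cf i := fun i => Finset.sum_nonneg fun _ _ => abs_nonneg _
  have himg : ∀ i : Fin d, ∃ g, g ∈ (PQ n Q).subgroupOf (GQ n Q) ∧ lQ n Q g = vQ i := by
    intro i
    set Limg : AddSubgroup (Fin n → ℚ) :=
      { carrier := lQ n Q '' (((PQ n Q).subgroupOf (GQ n Q) : Subgroup ↥(GQ n Q)) : Set ↥(GQ n Q))
        zero_mem' := ⟨1, by
          simp only [SetLike.mem_coe]
          exact ⟨Subgroup.one_mem _, lQ_one n Q⟩⟩
        add_mem' := by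
          rintro a b ⟨p, hp, rfl⟩ ⟨q, hq, rfl⟩
          simp only [SetLike.mem_coe] at hp hq
          exact ⟨p * q, by simp only [SetLike.mem_coe]; exact ⟨mul_mem hp hq,
            lQ_mul_of_rQ_zero n Q q (hrQ0 p hp)⟩⟩
        neg_mem' := by
          rintro a ⟨p, hp, rfl⟩
          simp only [SetLike.mem_coe] at hp
          exact ⟨p⁻¹, by simp only [SetLike.mem_coe]; exact ⟨inv_mem hp,
            lQ_inv_of_rQ_zero n Q (hrQ0 p hp)⟩⟩ } with hLimg
    have hLsub : L ≤ AddSubgroup.toIntSubmodule Limg := by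
      rw [hL, Submodule.span_le]
      rintro _ ⟨x, hx, rfl⟩
      exact ⟨x, by simp only [SetLike.mem_coe]; exact hXP x hx, rfl⟩
    obtain ⟨g, hg, hgl⟩ := hLsub (bb i).2
    simp only [SetLike.mem_coe] at hg
    exact ⟨g, hg, hgl⟩
  choose gg hgg1 hgg2 using himg
  choose kk hkk using fun i => exists_mem_pow_of_mem_closure hXsymm
    (show gg i ∈ Subgroup.closure X by rw [hXgen]; exact hgg1 i)
  refine ⟨∑ i, (kk i : ℚ) * cf i,
    Finset.sum_nonneg fun i _ => mul_nonneg (by positivity) (hcf0 i), ?_⟩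
  intro h hh
  have hhl : lQ n Q h ∈ L := hmemL h hh
  set a : Fin d →₀ ℤ := bb.repr ⟨lQ n Q h, hhl⟩ with ha
  have hrepr : ∑ i, (a i : ℚ) • vQ i = lQ n Q h := by
    have h1 := bb.sum_repr ⟨lQ n Q h, hhl⟩
    have h2 := congrArg L.subtype h1
    rw [map_sum] at h2
    have h3 : ∀ i, L.subtype (a i • bb i) = (a i : ℚ) • vQ i := by
      intro i
      rw [map_zsmul, Int.cast_smul_eq_zsmul]
      rfl
    rw [Finset.sum_congr rfl fun i _ => h3 i] at h2
    exact h2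
  have hcoef : ∀ i, |(a i : ℚ)| ≤ cf i * normQ (lQ n Q h) := by
    intro i
    have h1 : f i (lQ n Q h) = (a i : ℚ) := by
      rw [← hrepr, map_sum]
      have h2 : ∀ j, f i ((a j : ℚ) • vQ j) = (a j : ℚ) * (if j = i then 1 else 0) := by
        intro j
        rw [map_smul, hdelta, smul_eq_mul]
      rw [Finset.sum_congr rfl fun j _ => h2 j]
      simp
    rw [← h1]
    exact funct_bound (f i) (lQ n Q h)
  have hword : ∀ s : Finset (Fin d), ∃ g : ↥(GQ n Q),
      g ∈ X ^ (∑ i ∈ s, kk i * (a i).natAbs) ∧ rQ n Q g = 0 ∧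
      lQ n Q g = ∑ i ∈ s, (a i : ℚ) • vQ i := by
    intro s
    induction s using Finset.induction with
    | empty =>
        refine ⟨1, ?_, rQ_one n Q, by rw [lQ_one, Finset.sum_empty]⟩
        rw [Finset.sum_empty, pow_zero]
        exact Set.mem_one.mpr rfl
    | @insert i s hi ih =>
        obtain ⟨g, hg, hgr, hgl⟩ := ih
        have hgi : rQ n Q (gg i) = 0 := hrQ0 _ (hgg1 i)
        refine ⟨gg i ^ (a i) * g, ?_, ?_, ?_⟩
        · rw [Finset.sum_insert hi, pow_add]
          exact Set.mul_mem_mul (zpow_mem_pow_set n Q hXsymm (hkk i) (a i)) hg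
        · rw [rQ_mul, (rQ_lQ_zpow n Q hgi (a i)).1, hgr, add_zero]
        · rw [lQ_mul_of_rQ_zero n Q g (rQ_lQ_zpow n Q hgi (a i)).1,
            (rQ_lQ_zpow n Q hgi (a i)).2, hgg2 i, hgl, Finset.sum_insert hi,
            ← Int.cast_smul_eq_zsmul ℚ]
  obtain ⟨g, hg, hgr, hgl⟩ := hword Finset.univ
  have hgh : g = h := eq_of_lQ_rQ n Q g h (by rw [hgl, hrepr]) (by rw [hgr, hrQ0 h hh])
  rw [hgh] at hg
  have hwl : wordLength X h ≤ ∑ i, kk i * (a i).natAbs := Nat.sInf_le hg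
  calc (wordLength X h : ℚ) ≤ ((∑ i, kk i * (a i).natAbs : ℕ) : ℚ) := by exact_mod_cast hwl
    _ = ∑ i, (kk i : ℚ) * |(a i : ℚ)| := by
        push_cast
        refine Finset.sum_congr rfl fun i _ => by
          congr 1
          rw [← Int.cast_abs, Int.abs_eq_natAbs, Int.cast_natCast]
    _ ≤ ∑ i, (kk i : ℚ) * (cf i * normQ (lQ n Q h)) := by
        refine Finset.sum_le_sum fun i _ => ?_
        exact mul_le_mul_of_nonneg_left (hcoef i) (by positivity)
    _ = (∑ i, (kk i : ℚ) * cf i) * normQ (lQ n Q h) := by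
        rw [Finset.sum_mul]
        refine Finset.sum_congr rfl fun i _ => by ring

end WordBound2
lemma mulVecLin_pow {n : ℕ} (B : Matrix (Fin n) (Fin n) ℚ) (k : ℕ) :
    B.mulVecLin ^ k = (B ^ k).mulVecLin := by
  induction k with
  | zero => rw [pow_zero, pow_zero, Matrix.mulVecLin_one]; rfl
  | succ k ih => rw [pow_succ, pow_succ, ih, Matrix.mulVecLin_mul]; rfl

section Growth

variable (n : ℕ) (Q : GL (Fin n) ℚ)

set_option maxHeartbeats 2000000 in
lemma growth_bound (M : ℕ) (hM : 1 ≤ M) :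
    ∃ (e : ℕ) (c : ℚ) (π : (Fin n → ℚ) →ₗ[ℚ] (Fin n → ℚ)),
      1 ≤ e ∧ 0 ≤ c ∧
      (∀ x, (Amat n Q (M : ℤ)).mulVec x = x → π x = x) ∧
      (∀ (i : ℤ) (x : Fin n → ℚ), π ((Amat n Q i).mulVec x) = (Amat n Q i).mulVec (π x)) ∧
      (∀ (i : ℤ) (x : Fin n → ℚ),
        normQ ((Amat n Q i).mulVec (π x)) ≤ c * ((i.natAbs : ℚ) + 1) ^ e * normQ (π x)) := by
  classical
  set P1 : GL (Fin n) ℚ := Q ^ M with hP1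
  set B : Matrix (Fin n) (Fin n) ℚ := (P1 : Matrix (Fin n) (Fin n) ℚ) - 1 with hB
  set B' : Matrix (Fin n) (Fin n) ℚ := ((P1⁻¹ : GL (Fin n) ℚ) : Matrix (Fin n) (Fin n) ℚ) - 1
    with hB'
  have hP1val : (P1 : Matrix (Fin n) (Fin n) ℚ) = Amat n Q (M : ℤ) := by
    rw [Amat, zpow_natCast]
  have hP1inv : ((P1⁻¹ : GL (Fin n) ℚ) : Matrix (Fin n) (Fin n) ℚ) = Amat n Q (-(M : ℤ)) := by
    rw [Amat, zpow_neg, zpow_natCast]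
  have honeB : 1 + B = (P1 : Matrix (Fin n) (Fin n) ℚ) := by rw [hB]; abel
  have honeB' : 1 + B' = ((P1⁻¹ : GL (Fin n) ℚ) : Matrix (Fin n) (Fin n) ℚ) := by rw [hB']; abel
  -- commutation of Amat with B
  have hAcomm : ∀ i : ℤ, Commute (Amat n Q i) B := by
    intro i
    rw [hB, hP1val]
    apply Commute.sub_right
    · show Amat n Q i * Amat n Q (M : ℤ) = Amat n Q (M : ℤ) * Amat n Q i
      rw [← Amat_add, ← Amat_add, add_comm]
    · exact Commute.one_right _
  -- Fitting decomposition
  obtain ⟨e0, he0⟩ := Filter.eventually_atTop.mp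
    (LinearMap.eventually_isCompl_ker_pow_range_pow (B.mulVecLin))
  set e := max e0 1 with he
  have hcompl := he0 e (le_max_left _ _)
  set W := LinearMap.ker (B.mulVecLin ^ e) with hW
  set U := LinearMap.range (B.mulVecLin ^ e) with hU
  have hmemW : ∀ x, x ∈ W ↔ (B ^ e).mulVec x = 0 := by
    intro x
    rw [hW, LinearMap.mem_ker, mulVecLin_pow, Matrix.mulVecLin_apply]
  set π : (Fin n → ℚ) →ₗ[ℚ] (Fin n → ℚ) :=
    W.subtype ∘ₗ W.projectionOnto U hcompl with hπ
  have hπW : ∀ x, π x ∈ W := fun x => (W.projectionOnto U hcompl x).2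
  have hπ_left : ∀ x ∈ W, π x = x := by
    intro x hx
    show (W.subtype) (W.projectionOnto U hcompl x) = x
    rw [show x = ((⟨x, hx⟩ : W) : Fin n → ℚ) from rfl,
      Submodule.linearProjOfIsCompl_apply_left hcompl]
    rfl
  have hπ_right : ∀ x ∈ U, π x = 0 := by
    intro x hx
    show (W.subtype) (W.projectionOnto U hcompl x) = 0
    rw [Submodule.linearProjOfIsCompl_apply_right' hcompl hx]
    rfl
  -- invariance
  have hWinv : ∀ (i : ℤ), ∀ x ∈ W, (Amat n Q i).mulVec x ∈ W := by
    intro i x hx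
    rw [hmemW] at hx ⊢
    rw [Matrix.mulVec_mulVec, ← ((hAcomm i).pow_right e).eq, ← Matrix.mulVec_mulVec, hx,
      Matrix.mulVec_zero]
  have hUinv : ∀ (i : ℤ), ∀ x ∈ U, (Amat n Q i).mulVec x ∈ U := by
    intro i x hx
    rw [hU] at hx ⊢
    obtain ⟨z, hz⟩ := hx
    refine ⟨(Amat n Q i).mulVec z, ?_⟩
    rw [mulVecLin_pow, Matrix.mulVecLin_apply] at hz ⊢
    rw [Matrix.mulVec_mulVec, ← ((hAcomm i).pow_right e).eq, ← Matrix.mulVec_mulVec, hz]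
  -- commutation of π with Amat
  have hπcomm : ∀ (i : ℤ) (x : Fin n → ℚ), π ((Amat n Q i).mulVec x) = (Amat n Q i).mulVec (π x) := by
    intro i x
    obtain ⟨w, u, hw, hu, hwu⟩ := Submodule.codisjoint_iff_exists_add_eq.mp hcompl.codisjoint x
    have hx : x = w + u := hwu.symm
    subst hx
    rw [Matrix.mulVec_add, map_add, map_add, hπ_left w hw, hπ_right u hu, add_zero,
      hπ_left _ (hWinv i w hw), hπ_right _ (hUinv i u hu), add_zero]
  -- fixed points are in W
  have hfix : ∀ x, (Amat n Q (M : ℤ)).mulVec x = x → π x = x := by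
    intro x hx
    apply hπ_left
    rw [hmemW]
    have hBx : B.mulVec x = 0 := by
      rw [hB, Matrix.sub_mulVec, hP1val, hx, Matrix.one_mulVec, sub_self]
    have hee : e = (e - 1) + 1 := by omega
    rw [hee, pow_succ, ← Matrix.mulVec_mulVec, hBx, Matrix.mulVec_zero]
  -- B' nilpotency on W
  have hB'nil : ∀ x ∈ W, (B' ^ e).mulVec x = 0 := by
    intro x hx
    rw [hmemW] at hx
    have hCB : Commute ((P1⁻¹ : GL (Fin n) ℚ) : Matrix (Fin n) (Fin n) ℚ) B := by
      rw [hP1inv]; exact hAcomm _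
    have hB'eq : B' = -(((P1⁻¹ : GL (Fin n) ℚ) : Matrix (Fin n) (Fin n) ℚ) * B) := by
      rw [hB', hB, mul_sub, mul_one]
      have : ((P1⁻¹ : GL (Fin n) ℚ) : Matrix (Fin n) (Fin n) ℚ) * (P1 : Matrix (Fin n) (Fin n) ℚ)
          = 1 := by
        rw [← Units.val_mul, inv_mul_cancel, Units.val_one]
      rw [this, neg_sub]
    rw [hB'eq, neg_pow, hCB.mul_pow, ← Matrix.mulVec_mulVec, ← Matrix.mulVec_mulVec,
      hx, Matrix.mulVec_zero, Matrix.mulVec_zero]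
  -- constants
  set cB : ℚ := ∑ t ∈ Finset.range e, matB (B ^ t) with hcB
  set cB' : ℚ := ∑ t ∈ Finset.range e, matB (B' ^ t) with hcB'
  set cS : ℚ := ∑ s ∈ Finset.range M, matB (Amat n Q (s : ℤ)) with hcS
  have hcB0 : 0 ≤ cB := Finset.sum_nonneg fun _ _ => matB_nonneg _
  have hcB'0 : 0 ≤ cB' := Finset.sum_nonneg fun _ _ => matB_nonneg _
  have hcS0 : 0 ≤ cS := Finset.sum_nonneg fun _ _ => matB_nonneg _
  have hcBle : ∀ t, t < e → matB (B ^ t) ≤ cB := fun t ht =>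
    Finset.single_le_sum (f := fun t => matB (B ^ t)) (fun _ _ => matB_nonneg _)
      (Finset.mem_range.mpr ht)
  have hcB'le : ∀ t, t < e → matB (B' ^ t) ≤ cB' := fun t ht =>
    Finset.single_le_sum (f := fun t => matB (B' ^ t)) (fun _ _ => matB_nonneg _)
      (Finset.mem_range.mpr ht)
  refine ⟨e, (e : ℚ) * (cB + cB') * cS, π, le_max_right _ _,
    mul_nonneg (mul_nonneg (Nat.cast_nonneg e) (add_nonneg hcB0 hcB'0)) hcS0, hfix, hπcomm, ?_⟩
  intro i x
  set w := π x with hw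
  have hwW : w ∈ W := hπW x
  -- division with remainder
  set q : ℤ := i / (M : ℤ) with hq
  set s : ℤ := i % (M : ℤ) with hs
  have hMnz : (M : ℤ) ≠ 0 := by exact_mod_cast Nat.one_le_iff_ne_zero.mp hM
  have hs0 : 0 ≤ s := Int.emod_nonneg i hMnz
  have hsM : s < (M : ℤ) := Int.emod_lt_of_pos i (by exact_mod_cast hM)
  have hi : (M : ℤ) * q + s = i := Int.mul_ediv_add_emod i (M : ℤ)
  have hqabs : q.natAbs ≤ i.natAbs := by
    have := Int.abs_ediv_le_abs i (M : ℤ)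
    rw [Int.abs_eq_natAbs, Int.abs_eq_natAbs] at this
    exact_mod_cast this
  -- y = Amat s w
  set y : Fin n → ℚ := (Amat n Q s).mulVec w with hy
  have hyW : y ∈ W := hWinv s w hwW
  have hyn : normQ y ≤ cS * normQ w := by
    have h1 : normQ y ≤ matB (Amat n Q s) * normQ w := normQ_mulVec_le _ _
    have h2 : matB (Amat n Q s) ≤ cS := by
      have hsnat : s = ((s.toNat : ℕ) : ℤ) := by omega
      rw [hsnat]
      exact Finset.single_le_sum (f := fun t : ℕ => matB (Amat n Q (t : ℤ)))
        (fun _ _ => matB_nonneg _) (Finset.mem_range.mpr (by omega))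
    exact le_trans h1 (mul_le_mul_of_nonneg_right h2 (normQ_nonneg _))
  have hsplit : (Amat n Q i).mulVec w = (Amat n Q ((M : ℤ) * q)).mulVec y := by
    rw [hy, Matrix.mulVec_mulVec, ← Amat_add, hi]
  -- the key bound on Amat (M*q) applied to y
  have hkey : normQ ((Amat n Q ((M : ℤ) * q)).mulVec y)
      ≤ (e : ℚ) * (cB + cB') * ((i.natAbs : ℚ) + 1) ^ e * normQ y := by
    have habs : ((q.natAbs : ℚ) + 1) ^ e ≤ ((i.natAbs : ℚ) + 1) ^ e := by
      apply pow_le_pow_left₀ (by positivity)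
      have : (q.natAbs : ℚ) ≤ (i.natAbs : ℚ) := by exact_mod_cast hqabs
      linarith
    rcases le_or_gt 0 q with hq0 | hq0
    · -- q ≥ 0
      have hMq : (M : ℤ) * q = ((M * q.toNat : ℕ) : ℤ) := by
        push_cast
        rw [Int.toNat_of_nonneg hq0]
      have hmat : Amat n Q ((M : ℤ) * q) = (1 + B) ^ q.toNat := by
        rw [hMq, Amat_natCast, honeB, hP1, Units.val_pow_eq_pow_val, ← pow_mul]
      have hb := binom_growth B e cB hcB0 hcBle q.toNat y ((hmemW y).mp hyW)
      rw [hmat]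
      refine le_trans hb ?_
      have hq1 : ((q.toNat : ℚ) + 1) ^ e ≤ ((i.natAbs : ℚ) + 1) ^ e := by
        refine le_trans ?_ habs
        apply pow_le_pow_left₀ (by positivity)
        have : q.toNat = q.natAbs := by omega
        rw [this]
      calc (e : ℚ) * cB * ((q.toNat : ℚ) + 1) ^ e * normQ y
          ≤ (e : ℚ) * cB * ((i.natAbs : ℚ) + 1) ^ e * normQ y := by
            apply mul_le_mul_of_nonneg_right _ (normQ_nonneg _)
            apply mul_le_mul_of_nonneg_left hq1 (by positivity)
        _ ≤ (e : ℚ) * (cB + cB') * ((i.natAbs : ℚ) + 1) ^ e * normQ y := by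
            apply mul_le_mul_of_nonneg_right _ (normQ_nonneg _)
            apply mul_le_mul_of_nonneg_right _ (by positivity)
            have : cB ≤ cB + cB' := by linarith
            apply mul_le_mul_of_nonneg_left this (by positivity)
    · -- q < 0
      set m : ℕ := (-q).toNat with hm
      have hMq : (M : ℤ) * q = -((M * m : ℕ) : ℤ) := by
        push_cast
        rw [hm, Int.toNat_of_nonneg (by omega)]
        ring
      have hmat : Amat n Q ((M : ℤ) * q) = (1 + B') ^ m := by
        rw [hMq, Amat, zpow_neg, zpow_natCast, pow_mul, honeB', ← hP1, ← inv_pow,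
          Units.val_pow_eq_pow_val]
      have hb := binom_growth B' e cB' hcB'0 hcB'le m y (hB'nil y hyW)
      rw [hmat]
      refine le_trans hb ?_
      have hq1 : ((m : ℚ) + 1) ^ e ≤ ((i.natAbs : ℚ) + 1) ^ e := by
        refine le_trans ?_ habs
        apply pow_le_pow_left₀ (by positivity)
        have : m = q.natAbs := by omega
        rw [this]
      calc (e : ℚ) * cB' * ((m : ℚ) + 1) ^ e * normQ y
          ≤ (e : ℚ) * cB' * ((i.natAbs : ℚ) + 1) ^ e * normQ y := by
            apply mul_le_mul_of_nonneg_right _ (normQ_nonneg _)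
            apply mul_le_mul_of_nonneg_left hq1 (by positivity)
        _ ≤ (e : ℚ) * (cB + cB') * ((i.natAbs : ℚ) + 1) ^ e * normQ y := by
            apply mul_le_mul_of_nonneg_right _ (normQ_nonneg _)
            apply mul_le_mul_of_nonneg_right _ (by positivity)
            have : cB' ≤ cB + cB' := by linarith
            apply mul_le_mul_of_nonneg_left this (by positivity)
  calc normQ ((Amat n Q i).mulVec w)
      = normQ ((Amat n Q ((M : ℤ) * q)).mulVec y) := by rw [hsplit]
    _ ≤ (e : ℚ) * (cB + cB') * ((i.natAbs : ℚ) + 1) ^ e * normQ y := hkey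
    _ ≤ (e : ℚ) * (cB + cB') * ((i.natAbs : ℚ) + 1) ^ e * (cS * normQ w) := by
        apply mul_le_mul_of_nonneg_left hyn (by positivity)
    _ = (e : ℚ) * (cB + cB') * cS * ((i.natAbs : ℚ) + 1) ^ e * normQ w := by ring

end Growth
lemma list_sum_le_length_mul {α : Type*} (l : List α) (f : α → ℚ) (K : ℚ) (hK : 0 ≤ K)
    (h : ∀ a ∈ l, f a ≤ K) : (l.map f).sum ≤ (l.length : ℚ) * K := by
  induction l with
  | nil => simp
  | cons a l ih =>
      simp only [List.map_cons, List.sum_cons, List.length_cons]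
      have h1 : f a ≤ K := h a (List.mem_cons_self)
      have h2 : (l.map f).sum ≤ (l.length : ℚ) * K := ih fun b hb => h b (List.mem_cons_of_mem a hb)
      push_cast
      nlinarith
set_option maxHeartbeats 1000000 in
/-- Let `Q ∈ GL_n(ℚ)`, let `K = ⟨Qⁱ(ℤⁿ) : i ∈ ℤ⟩ ≤ ℚⁿ`, and let
`G = K ⋊_Q ℤ`.  Let `P_Q = {v ∈ K : Qᵐv = v for some m ≥ 1}`.  Let `R ⊆ K` be a finite
symmetric set such that `S = {(r,1) : r ∈ R} ∪ {(0,t),(0,t⁻¹)}` generates `G`, and let `X` be a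
finite symmetric generating set of `P_Q` containing the identity.  Then `P_Q` is at most
polynomially distorted in `G`: there are constants `C, d` with `Δ_G^{P_Q}(r) ≤ C·rᵈ` for all
`r ≥ 1`. -/
theorem periodic_points_polynomially_distorted_in_KQ
    (n : ℕ) (Q : GL (Fin n) ℚ)
    (R : Set ↥(GQ n Q)) (hRfin : R.Finite) (hRsymm : R⁻¹ = R)
    (hRK : ∀ g ∈ R, (g : QAmbient n Q).right = 1)
    (S : Set ↥(GQ n Q)) (hS : S = R ∪ {tQ n Q, (tQ n Q)⁻¹})
    (hSgen : Subgroup.closure S = ⊤)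
    (X : Set ↥(GQ n Q)) (hXfin : X.Finite) (hXsymm : X⁻¹ = X) (hX1 : (1 : ↥(GQ n Q)) ∈ X)
    (hXgen : Subgroup.closure X = (PQ n Q).subgroupOf (GQ n Q)) :
    ∃ C d : ℕ, ∀ r : ℕ, 1 ≤ r →
      distortion ((PQ n Q).subgroupOf (GQ n Q)) S X r ≤ C * r ^ d := by
  classical
  -- symmetry of S
  have hmemRinv : ∀ g : ↥(GQ n Q), g⁻¹ ∈ R ↔ g ∈ R := by
    intro g
    conv_rhs => rw [← hRsymm]
    exact Iff.symm Set.mem_inv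
  have hSsymm : S⁻¹ = S := by
    rw [hS, Set.union_inv, hRsymm, Set.inv_insert, Set.inv_singleton, inv_inv]
    rw [Set.pair_comm]
  -- the period
  obtain ⟨M, hM1, hMfix0⟩ := exists_period n Q X hXfin
    (fun x hx => hXgen ▸ Subgroup.subset_closure hx)
  have hMfix : ∀ h ∈ (PQ n Q).subgroupOf (GQ n Q),
      (Amat n Q (M : ℤ)).mulVec (lQ n Q h) = lQ n Q h := by
    intro h hh
    exact hMfix0 h (by rw [hXgen]; exact hh)
  -- the projection and growth bound
  obtain ⟨e, c, π, he1, hc0, hfix, hπcomm, hgrow⟩ := growth_bound n Q M hM1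
  -- word-length bound from norm
  obtain ⟨CX, hCX0, hCX⟩ := word_bound_from_norm n Q X hXfin hXsymm hXgen
  -- bound on the projected generators
  have hRvfin : (lQ n Q '' R).Finite := hRfin.image _
  set CR : ℚ := ∑ v ∈ hRvfin.toFinset, normQ (π v) with hCRdef
  have hCR0 : 0 ≤ CR := Finset.sum_nonneg fun _ _ => normQ_nonneg _
  have hCRle : ∀ v ∈ lQ n Q '' R, normQ (π v) ≤ CR := by
    intro v hv
    exact Finset.single_le_sum (f := fun v => normQ (π v)) (fun _ _ => normQ_nonneg _)
      (hRvfin.mem_toFinset.mpr hv)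
  set Cq : ℚ := CX * (c * CR * 2 ^ e) with hCqdef
  have hCq0 : 0 ≤ Cq := by positivity
  refine ⟨⌈Cq⌉₊, e + 1, ?_⟩
  intro r hr
  apply csSup_le'
  rintro w ⟨h, ⟨hhP, hhS⟩, rfl⟩
  -- h lies in S ^ k for k = wordLength S h ≤ r
  have hSne : ∃ k : ℕ, h ∈ S ^ k :=
    exists_mem_pow_of_mem_closure hSsymm (by rw [hSgen]; exact Subgroup.mem_top h)
  have hk : h ∈ S ^ (wordLength S h) := Nat.sInf_mem hSne
  set k : ℕ := wordLength S h with hkdef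
  have hkr : k ≤ r := hhS
  obtain ⟨hra, l, hlen, hmem, hsum⟩ := word_decomp n Q R S hRK hS k h hk
  -- project
  have hπl : π (lQ n Q h) = lQ n Q h := hfix _ (hMfix h hhP)
  have hproj : lQ n Q h = (l.map (fun p => (Amat n Q p.1).mulVec (π p.2))).sum := by
    conv_lhs => rw [← hπl, hsum]
    rw [map_list_sum, List.map_map]
    congr 1
    refine List.map_congr_left fun p _ => ?_
    exact hπcomm p.1 p.2
  -- norm estimate
  have hrq1 : (1 : ℚ) ≤ (r : ℚ) := by exact_mod_cast hr
  set K : ℚ := c * ((r : ℚ) + 1) ^ e * CR with hKdef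
  have hK0 : 0 ≤ K := by positivity
  have hterm : ∀ p ∈ l, normQ ((Amat n Q p.1).mulVec (π p.2)) ≤ K := by
    intro p hp
    obtain ⟨habs, hpR⟩ := hmem p hp
    have h1 := hgrow p.1 p.2
    have h2 : ((p.1.natAbs : ℚ) + 1) ^ e ≤ ((r : ℚ) + 1) ^ e := by
      apply pow_le_pow_left₀ (by positivity)
      have : p.1.natAbs ≤ r := by
        rw [Int.abs_eq_natAbs] at habs
        omega
      have h3 : (p.1.natAbs : ℚ) ≤ (r : ℚ) := by exact_mod_cast this
      linarith
    have h4 : normQ (π p.2) ≤ CR := hCRle p.2 hpR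
    calc normQ ((Amat n Q p.1).mulVec (π p.2))
        ≤ c * ((p.1.natAbs : ℚ) + 1) ^ e * normQ (π p.2) := h1
      _ ≤ c * ((r : ℚ) + 1) ^ e * CR := by
          apply mul_le_mul _ h4 (normQ_nonneg _) (by positivity)
          exact mul_le_mul_of_nonneg_left h2 hc0
  have hnorm : normQ (lQ n Q h) ≤ (r : ℚ) * K := by
    rw [hproj]
    calc normQ ((l.map (fun p => (Amat n Q p.1).mulVec (π p.2))).sum)
        ≤ ((l.map (fun p => (Amat n Q p.1).mulVec (π p.2))).map normQ).sum := by
          exact normQ_listSum_le _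
      _ ≤ ((l.map (fun p => (Amat n Q p.1).mulVec (π p.2))).length : ℚ) * K := by
          rw [List.map_map]
          have := list_sum_le_length_mul l (normQ ∘ fun p => (Amat n Q p.1).mulVec (π p.2)) K
            hK0 (fun a ha => hterm a ha)
          simpa using this
      _ ≤ (r : ℚ) * K := by
          apply mul_le_mul_of_nonneg_right _ hK0
          rw [List.length_map]
          have : (l.length : ℚ) ≤ (k : ℚ) := by exact_mod_cast hlen
          have h5 : (k : ℚ) ≤ (r : ℚ) := by exact_mod_cast hkr
          linarith
  -- combine
  have hfinal : (wordLength X h : ℚ) ≤ Cq * (r : ℚ) ^ (e + 1) := by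
    have h1 := hCX h hhP
    have h2 : CX * normQ (lQ n Q h) ≤ CX * ((r : ℚ) * K) :=
      mul_le_mul_of_nonneg_left hnorm hCX0
    have h3 : (r : ℚ) * K ≤ (c * CR * 2 ^ e) * (r : ℚ) ^ (e + 1) := by
      rw [hKdef]
      have h4 : ((r : ℚ) + 1) ^ e ≤ (2 * (r : ℚ)) ^ e := by
        apply pow_le_pow_left₀ (by positivity)
        linarith
      calc (r : ℚ) * (c * ((r : ℚ) + 1) ^ e * CR)
          ≤ (r : ℚ) * (c * (2 * (r : ℚ)) ^ e * CR) := by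
            apply mul_le_mul_of_nonneg_left _ (by positivity)
            apply mul_le_mul_of_nonneg_right _ hCR0
            exact mul_le_mul_of_nonneg_left h4 hc0
        _ = (c * CR * 2 ^ e) * (r : ℚ) ^ (e + 1) := by
            rw [mul_pow, pow_succ]
            ring
    calc (wordLength X h : ℚ) ≤ CX * normQ (lQ n Q h) := h1
      _ ≤ CX * ((r : ℚ) * K) := h2
      _ ≤ CX * ((c * CR * 2 ^ e) * (r : ℚ) ^ (e + 1)) :=
          mul_le_mul_of_nonneg_left h3 hCX0
      _ = Cq * (r : ℚ) ^ (e + 1) := by rw [hCqdef]; ring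
  have hceil : Cq * (r : ℚ) ^ (e + 1) ≤ ((⌈Cq⌉₊ * r ^ (e + 1) : ℕ) : ℚ) := by
    push_cast
    exact mul_le_mul_of_nonneg_right (Nat.le_ceil Cq) (by positivity)
  exact_mod_cast le_trans hfinal hceil
end
end

section
/- Let G = K ⋊_φ ⟨t⟩ be a finitely generated abelian-by-cyclic group and let S be any finite symmetric generating set of G containing the identity. Then the relative growth of the group of periodic points P_φ in G is polynomial: there exist constants C and d such that |P_φ ∩ Sʳ| ≤ C·rᵈ for all r ≥ 1. -/
open scoped Pointwise
open LaurentPolynomial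

private lemma pow_fix {K : Type*} [CommGroup K] (ψ : MulAut K) (x : K) (hx : ψ x = x) :
    ∀ m : ℕ, (ψ ^ m) x = x := by
  intro m
  induction m with
  | zero => simp
  | succ m ih => rw [pow_succ, MulAut.mul_apply, hx, ih]

/-- The subgroup of periodic points of an automorphism `φ` of an abelian group `K`. -/
def periodicPts {K : Type*} [CommGroup K] (φ : MulAut K) : Subgroup K where
  carrier := {a : K | ∃ n : ℕ, 1 ≤ n ∧ (φ ^ n) a = a}
  one_mem' := ⟨1, le_refl 1, by simp⟩
  mul_mem' := by
    rintro a b ⟨n, hn, ha⟩ ⟨m, hm, hb⟩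
    refine ⟨n * m, Nat.one_le_iff_ne_zero.2 (by positivity), ?_⟩
    have h1 : (φ ^ (n * m)) a = a := by
      rw [pow_mul]; exact pow_fix (φ ^ n) a ha m
    have h2 : (φ ^ (n * m)) b = b := by
      rw [mul_comm, pow_mul]; exact pow_fix (φ ^ m) b hb n
    rw [map_mul, h1, h2]
  inv_mem' := by
    rintro a ⟨n, hn, ha⟩
    exact ⟨n, hn, by rw [map_inv, ha]⟩

noncomputable section PPAux

/-! ### Generic counting lemmas -/

section Count
variable {ι : Type*} [Fintype ι] [DecidableEq ι] {W : Type*} [AddCommGroup W]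

/-- Sums of the generators `g` with integer coefficients bounded by `c`. -/
def bddSum (g : ι → W) (c : ℕ) : Set W :=
  {x | ∃ n : ι → ℤ, (∀ j, |n j| ≤ (c : ℤ)) ∧ x = ∑ j, n j • g j}

omit [DecidableEq ι] in
lemma add_mem_bddSum {g : ι → W} {c₁ c₂ : ℕ} {x y : W}
    (hx : x ∈ bddSum g c₁) (hy : y ∈ bddSum g c₂) : x + y ∈ bddSum g (c₁ + c₂) := by
  obtain ⟨n, hn, rfl⟩ := hx
  obtain ⟨n', hn', rfl⟩ := hy
  refine ⟨n + n', fun j => ?_, by simp [add_smul, Finset.sum_add_distrib]⟩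
  calc |(n + n') j| ≤ |n j| + |n' j| := abs_add_le _ _
    _ ≤ (c₁ : ℤ) + c₂ := add_le_add (hn j) (hn' j)
    _ = ((c₁ + c₂ : ℕ) : ℤ) := by push_cast; ring

omit [DecidableEq ι] in
lemma sum_mem_bddSum {g : ι → W} {c : ℕ} {r : ℕ} {f : Fin r → W}
    (hf : ∀ i, f i ∈ bddSum g c) : (∑ i, f i) ∈ bddSum g (r * c) := by
  induction r with
  | zero => exact ⟨0, by simp, by simp⟩
  | succ r ih =>
      rw [Fin.sum_univ_castSucc]
      have := add_mem_bddSum (ih (f := fun i => f i.castSucc) (fun i => hf _)) (hf (Fin.last r))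
      simpa [add_mul] using this

lemma subsum_mem_bddSum {g : ι → W} {c : ℕ} {m : ℕ} (σ : Fin m → ι)
    (hσ : Function.Injective σ) (a : Fin m → ℤ) (ha : ∀ i, |a i| ≤ (c : ℤ)) :
    (∑ i, a i • g (σ i)) ∈ bddSum g c := by
  refine ⟨fun j => ∑ i, if σ i = j then a i else 0, fun j => ?_, ?_⟩
  · show |∑ i, if σ i = j then a i else 0| ≤ (c : ℤ)
    by_cases h : ∃ i, σ i = j
    · obtain ⟨i₀, rfl⟩ := h
      have heq : (∑ i, if σ i = σ i₀ then a i else 0) = a i₀ := by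
        rw [Finset.sum_eq_single i₀]
        · simp
        · intro b _ hb
          exact if_neg fun h' => hb (hσ h')
        · simp
      rw [heq]; exact ha i₀
    · have heq : (∑ i, if σ i = j then a i else 0) = 0 :=
        Finset.sum_eq_zero fun i _ => by
          simp only [ite_eq_right_iff]; intro h'; exact absurd ⟨i, h'⟩ h
      rw [heq]; simp
  · have : ∀ j : ι, (∑ i, if σ i = j then a i else 0) • g j
        = ∑ i : Fin m, (if σ i = j then a i else 0) • g j := fun j => Finset.sum_smul
    simp only [this]
    rw [Finset.sum_comm]
    refine Finset.sum_congr rfl fun i _ => ?_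
    rw [Finset.sum_eq_single (σ i)]
    · simp
    · intro b _ hb; exact by rw [if_neg (Ne.symm hb), zero_smul]
    · simp

lemma bddSum_finite (g : ι → W) (c : ℕ) : (bddSum g c).Finite := by
  have : bddSum g c ⊆ (fun n : ι → ℤ => ∑ j, n j • g j) ''
      ↑(Fintype.piFinset fun _ : ι => Finset.Icc (-(c : ℤ)) c) := by
    rintro x ⟨n, hn, rfl⟩
    exact ⟨n, Finset.mem_coe.2 (Fintype.mem_piFinset.2 fun j =>
      Finset.mem_Icc.2 (abs_le.1 (hn j))), rfl⟩
  exact Set.Finite.subset (Set.Finite.image _ (Finset.finite_toSet _)) this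

lemma card_Icc_int (c : ℕ) : (Finset.Icc (-(c : ℤ)) c).card = 2 * c + 1 := by
  rw [Int.card_Icc]; omega

lemma ncard_bddSum_le (g : ι → W) (c : ℕ) :
    (bddSum g c).ncard ≤ (2 * c + 1) ^ Fintype.card ι := by
  have hsub : bddSum g c ⊆ (fun n : ι → ℤ => ∑ j, n j • g j) ''
      ↑(Fintype.piFinset fun _ : ι => Finset.Icc (-(c : ℤ)) c) := by
    rintro x ⟨n, hn, rfl⟩
    exact ⟨n, Finset.mem_coe.2 (Fintype.mem_piFinset.2 fun j =>
      Finset.mem_Icc.2 (abs_le.1 (hn j))), rfl⟩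
  have h1 := Set.ncard_le_ncard hsub (Set.Finite.image _ (Finset.finite_toSet _))
  have h2 := Set.ncard_image_le (f := fun n : ι → ℤ => ∑ j, n j • g j)
    (s := ↑(Fintype.piFinset fun _ : ι => Finset.Icc (-(c : ℤ)) c)) (Finset.finite_toSet _)
  refine h1.trans (h2.trans ?_)
  rw [Set.ncard_coe_finset, Fintype.card_piFinset]
  simp only [card_Icc_int, Finset.prod_const, Finset.card_univ]
  exact le_refl _

end Count

/-! ### Noetherian stabilization and binomial lemmas -/

section Noeth
variable {R : Type*} [CommRing R] {M : Type*} [AddCommGroup M] [Module R M]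

lemma smul_eq_zero_of_dvd {p w : R} (h : p ∣ w) {x : M} (hx : p • x = 0) : w • x = 0 := by
  obtain ⟨c, rfl⟩ := h
  rw [mul_comm, mul_smul, hx, smul_zero]

lemma exists_uniform_period [IsNoetherian R M] (u : ℕ → R)
    (hdvd : ∀ m n : ℕ, 1 ≤ m → m ∣ n → (u m - 1) ∣ (u n - 1)) :
    ∃ N : ℕ, 1 ≤ N ∧ ∀ n : ℕ, 1 ≤ n → ∀ x : M, (u n - 1) • x = 0 → (u N - 1) • x = 0 := by
  have hmono : Monotone fun n => LinearMap.ker (LinearMap.lsmul R M (u (Nat.factorial n) - 1)) := by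
    apply monotone_nat_of_le_succ
    intro n x hx
    rw [LinearMap.mem_ker, LinearMap.lsmul_apply] at hx ⊢
    exact smul_eq_zero_of_dvd
      (hdvd _ _ (Nat.factorial_pos n) (Nat.factorial_dvd_factorial (Nat.le_succ n))) hx
  obtain ⟨n₀, hstab⟩ := monotone_stabilizes_iff_noetherian.mpr inferInstance
    ⟨fun n => LinearMap.ker (LinearMap.lsmul R M (u (Nat.factorial n) - 1)), hmono⟩
  refine ⟨Nat.factorial n₀, Nat.factorial_pos _, fun n hn x hx => ?_⟩
  have h1 : x ∈ LinearMap.ker (LinearMap.lsmul R M (u (Nat.factorial (max n n₀)) - 1)) := by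
    rw [LinearMap.mem_ker, LinearMap.lsmul_apply]
    exact smul_eq_zero_of_dvd (hdvd _ _ hn (Nat.dvd_factorial hn (le_max_left _ _))) hx
  have h2 : LinearMap.ker (LinearMap.lsmul R M (u (Nat.factorial n₀) - 1))
      = LinearMap.ker (LinearMap.lsmul R M (u (Nat.factorial (max n n₀)) - 1)) :=
    hstab (max n n₀) (le_max_right _ _)
  have h3 : x ∈ LinearMap.ker (LinearMap.lsmul R M (u (Nat.factorial n₀) - 1)) := by
    rw [h2]; exact h1
  rwa [LinearMap.mem_ker, LinearMap.lsmul_apply] at h3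

lemma exists_fitting_exponent [IsNoetherian R M] (p : R) :
    ∃ m : ℕ, 1 ≤ m ∧ ∀ x : M, p ^ (2 * m) • x = 0 → p ^ m • x = 0 := by
  have hmono : Monotone fun n => LinearMap.ker (LinearMap.lsmul R M (p ^ n)) := by
    apply monotone_nat_of_le_succ
    intro n x hx
    rw [LinearMap.mem_ker, LinearMap.lsmul_apply] at hx ⊢
    exact smul_eq_zero_of_dvd (pow_dvd_pow p (Nat.le_succ n)) hx
  obtain ⟨m₁, hstab⟩ := monotone_stabilizes_iff_noetherian.mpr inferInstance
    ⟨fun n => LinearMap.ker (LinearMap.lsmul R M (p ^ n)), hmono⟩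
  refine ⟨m₁ + 1, le_add_self, fun x hx => ?_⟩
  have e1 : LinearMap.ker (LinearMap.lsmul R M (p ^ m₁))
      = LinearMap.ker (LinearMap.lsmul R M (p ^ (m₁ + 1))) := hstab (m₁ + 1) (by omega)
  have e2 : LinearMap.ker (LinearMap.lsmul R M (p ^ m₁))
      = LinearMap.ker (LinearMap.lsmul R M (p ^ (2 * (m₁ + 1)))) := hstab (2 * (m₁ + 1)) (by omega)
  have h1 : x ∈ LinearMap.ker (LinearMap.lsmul R M (p ^ (m₁ + 1))) := by
    rw [← e1, e2, LinearMap.mem_ker, LinearMap.lsmul_apply]; exact hx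
  rwa [LinearMap.mem_ker, LinearMap.lsmul_apply] at h1

lemma binom_smul (p : R) (m : ℕ) (hm : 1 ≤ m) (hp : ∀ w : M, p ^ m • w = 0) :
    ∀ (k : ℕ) (w : M),
      (1 + p) ^ k • w = ∑ i ∈ Finset.range m, ((k.choose i : ℤ)) • (p ^ i • w) := by
  obtain ⟨m', rfl⟩ : ∃ m'', m = m'' + 1 := ⟨m - 1, by omega⟩
  intro k
  induction k with
  | zero =>
      intro w
      rw [pow_zero, one_smul, Finset.sum_range_succ']
      simp
  | succ k ih =>
      intro w
      have key : ∀ i : ℕ, p • ((k.choose i : ℤ) • (p ^ i • w))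
          = (k.choose i : ℤ) • (p ^ (i + 1) • w) := by
        intro i
        rw [smul_comm, ← mul_smul, ← pow_succ']
      calc (1 + p) ^ (k + 1) • w
          = (1 + p) • ((1 + p) ^ k • w) := by rw [pow_succ, mul_comm, mul_smul]
        _ = (1 + p) ^ k • w + p • ((1 + p) ^ k • w) := by
            rw [add_smul, one_smul]
        _ = (∑ i ∈ Finset.range (m' + 1), ((k.choose i : ℤ)) • (p ^ i • w))
            + ∑ i ∈ Finset.range (m' + 1), ((k.choose i : ℤ)) • (p ^ (i + 1) • w) := by
            rw [ih, Finset.smul_sum]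
            congr 1
            exact Finset.sum_congr rfl fun i _ => key i
        _ = (∑ i ∈ Finset.range (m' + 1), ((k.choose i : ℤ)) • (p ^ i • w))
            + ∑ i ∈ Finset.range m', ((k.choose i : ℤ)) • (p ^ (i + 1) • w) := by
            congr 1
            rw [Finset.sum_range_succ, hp w, smul_zero, add_zero]
        _ = ((∑ i ∈ Finset.range m', ((k.choose (i + 1) : ℤ)) • (p ^ (i + 1) • w)) + w)
            + ∑ i ∈ Finset.range m', ((k.choose i : ℤ)) • (p ^ (i + 1) • w) := by
            rw [Finset.sum_range_succ']
            simp
        _ = ∑ i ∈ Finset.range (m' + 1), (((k + 1).choose i : ℤ)) • (p ^ i • w) := by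
            rw [Finset.sum_range_succ']
            simp only [Nat.choose_succ_succ, Nat.cast_add, add_smul, Nat.choose_zero_right,
              Nat.cast_one, one_smul, pow_zero, Finset.sum_add_distrib]
            abel

end Noeth

/-! ### The Laurent polynomial ring and the module structure induced by `φ` -/

abbrev RL : Type := LaurentPolynomial ℤ

lemma T_geom (a : ℤ) (k : ℕ) :
    (T (a * k) : RL) - 1 = (∑ i ∈ Finset.range k, T (a * i)) * (T a - 1) := by
  induction k with
  | zero => simp
  | succ k ih =>
      rw [Finset.sum_range_succ, add_mul, ← ih]
      push_cast
      rw [mul_add, mul_one, T_add]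
      ring

lemma T_sub_one_dvd {m n : ℕ} (h : m ∣ n) : ((T (m : ℤ) : RL) - 1) ∣ (T (n : ℤ) - 1) := by
  obtain ⟨k, rfl⟩ := h
  have : ((m * k : ℕ) : ℤ) = (m : ℤ) * (k : ℕ) := by push_cast; ring
  rw [this, T_geom]
  exact Dvd.intro_left _ rfl

instance : IsNoetherianRing RL :=
  haveI := LaurentPolynomial.isLocalization (R := ℤ)
  IsLocalization.isNoetherianRing (Submonoid.powers (Polynomial.X : Polynomial ℤ))
    (LaurentPolynomial ℤ) inferInstance

variable {K : Type*} [CommGroup K]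

def linOf (ψ : MulAut K) : Module.End ℤ (Additive K) :=
  (AddEquiv.toIntLinearEquiv (MulEquiv.toAdditive ψ)).toLinearMap

@[simp] lemma linOf_apply (ψ : MulAut K) (x : K) :
    linOf ψ (Additive.ofMul x) = Additive.ofMul (ψ x) := rfl

def unitsOf : MulAut K →* (Module.End ℤ (Additive K))ˣ where
  toFun ψ := ⟨linOf ψ, linOf ψ⁻¹, by ext a; simp [linOf], by ext a; simp [linOf]⟩
  map_one' := by ext a; simp [linOf]
  map_mul' ψ χ := by ext a; simp [linOf]

def rhoOf (φ : MulAut K) : Multiplicative ℤ →* Module.End ℤ (Additive K) :=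
  (Units.coeHom _).comp ((unitsOf (K := K)).comp (zpowersHom (MulAut K) φ))

def FOf (φ : MulAut K) : RL →ₐ[ℤ] Module.End ℤ (Additive K) :=
  AddMonoidAlgebra.lift ℤ _ ℤ (rhoOf φ)

lemma FOf_T (φ : MulAut K) (n : ℤ) (x : K) :
    FOf φ (T n) (Additive.ofMul x) = Additive.ofMul ((φ ^ n) x) := by
  rw [FOf, T, AddMonoidAlgebra.lift_single]
  simp only [one_smul, rhoOf, MonoidHom.comp_apply, zpowersHom_apply, toAdd_ofAdd,
    Units.coeHom_apply]
  rfl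

/-- Generators for the counting set. -/
def gensOf {R W : Type*} [CommRing R] [AddCommGroup W] [Module R W] {β : Type*}
    (p p' : R) (t : ℕ → R) (m₀ N : ℕ) (v : β → W) :
    Bool × Fin m₀ × Fin N × β → W :=
  fun j => ((cond j.1 p p') ^ (j.2.1 : ℕ) * t (j.2.2.1 : ℕ)) • v j.2.2.2

/-- Type synonym for `Additive K` carrying the `ℤ[T,T⁻¹]`-module structure induced by `φ`. -/
def AK (φ : MulAut K) : Type _ := Additive K

variable (φ : MulAut K)

instance : AddCommGroup (AK φ) := inferInstanceAs (AddCommGroup (Additive K))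

instance : Module RL (AK φ) := Module.compHom (Additive K) (FOf φ).toRingHom

/-- The canonical map `K → AK φ`. -/
def ofK (x : K) : AK φ := Additive.ofMul x

lemma ofK_mul (x y : K) : ofK φ (x * y) = ofK φ x + ofK φ y := rfl

lemma ofK_one : ofK φ 1 = 0 := rfl

lemma ofK_injective : Function.Injective (ofK φ) := fun _ _ h => h

lemma T_smul_ofK (n : ℤ) (x : K) : (T n : RL) • ofK φ x = ofK φ ((φ ^ n) x) :=
  FOf_T φ n x

lemma ofK_prod {ι : Type*} (s : Finset ι) (f : ι → K) :
    ofK φ (∏ i ∈ s, f i) = ∑ i ∈ s, ofK φ (f i) := by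
  classical
  induction s using Finset.cons_induction with
  | empty => simp [ofK_one]
  | cons a s ha ih => rw [Finset.prod_cons, Finset.sum_cons, ofK_mul, ih]

end PPAux
set_option maxHeartbeats 1000000 in
/-- Let `G = K ⋊_φ ⟨t⟩` be a finitely generated abelian-by-cyclic group
(`K` abelian, written multiplicatively, `t` acting by `φ`) and let `S` be any finite symmetric
generating set of `G` containing the identity.  Then the relative growth of the group of
periodic points `P_φ` (viewed inside `G`) is polynomial: there are constants `C, d` with
`|P_φ ∩ Sʳ| ≤ C·rᵈ` for all `r ≥ 1`. -/
theorem periodicPts_polynomial_relative_growth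
    {K : Type*} [CommGroup K] (φ : MulAut K)
    (S : Set (K ⋊[zpowersHom (MulAut K) φ] Multiplicative ℤ))
    (hSfin : S.Finite) (hSsymm : S⁻¹ = S)
    (hS1 : (1 : K ⋊[zpowersHom (MulAut K) φ] Multiplicative ℤ) ∈ S)
    (hSgen : Subgroup.closure S = ⊤) :
    ∃ C d : ℕ, ∀ r : ℕ, 1 ≤ r →
      (((Subgroup.map SemidirectProduct.inl (periodicPts φ) :
          Subgroup (K ⋊[zpowersHom (MulAut K) φ] Multiplicative ℤ)) : Set _) ∩ S ^ r).ncard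
        ≤ C * r ^ d := by
  classical
  -- finite data extracted from `S`
  set BK : Finset K := hSfin.toFinset.image (fun s => s.left) with hBKdef
  set Mb : ℕ := hSfin.toFinset.sup (fun s => (Multiplicative.toAdd s.right).natAbs) with hMbdef
  have hMbS : ∀ s ∈ S, |Multiplicative.toAdd s.right| ≤ (Mb : ℤ) := by
    intro s hs
    have h1 : (Multiplicative.toAdd s.right).natAbs ≤ Mb :=
      Finset.le_sup (f := fun s => (Multiplicative.toAdd s.right).natAbs)
        (hSfin.mem_toFinset.2 hs)
    rw [Int.abs_eq_natAbs]
    exact_mod_cast h1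
  have hBKS : ∀ s ∈ S, s.left ∈ BK :=
    fun s hs => Finset.mem_image.2 ⟨s, hSfin.mem_toFinset.2 hs, rfl⟩
  -- decomposition of elements of `S ^ r`
  have hdec : ∀ (r : ℕ) (g : K ⋊[zpowersHom (MulAut K) φ] Multiplicative ℤ), g ∈ S ^ r →
      |Multiplicative.toAdd g.right| ≤ (Mb * r : ℤ) ∧
      ∃ e : Fin r → ℤ, ∃ b : Fin r → K, (∀ i, |e i| ≤ (Mb * r : ℤ) ∧ b i ∈ BK) ∧
        g.left = ∏ i, (φ ^ e i) (b i) := by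
    intro r
    induction r with
    | zero =>
        intro g hg
        rw [pow_zero, Set.mem_one] at hg
        subst hg
        refine ⟨by simp, fun i => i.elim0, fun i => i.elim0, fun i => i.elim0, by simp⟩
    | succ r ih =>
        intro g hg
        rw [pow_succ, Set.mem_mul] at hg
        obtain ⟨h, hh, s, hs, rfl⟩ := hg
        obtain ⟨hre, e, b, hb, hleft⟩ := ih h hh
        have hsr := hMbS s hs
        have hcast : ((Mb : ℤ) * ((r : ℕ) + 1 : ℕ)) = (Mb : ℤ) * r + Mb := by push_cast; ring
        have hMb0 : (0 : ℤ) ≤ (Mb : ℤ) := Int.ofNat_nonneg Mb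
        constructor
        · rw [SemidirectProduct.mul_right, toAdd_mul, hcast]
          calc |Multiplicative.toAdd h.right + Multiplicative.toAdd s.right|
              ≤ |Multiplicative.toAdd h.right| + |Multiplicative.toAdd s.right| := abs_add_le _ _
            _ ≤ (Mb : ℤ) * r + Mb := add_le_add hre hsr
        · refine ⟨Fin.snoc e (Multiplicative.toAdd h.right), Fin.snoc b s.left, fun i => ?_, ?_⟩
          · refine Fin.lastCases ?_ (fun i => ?_) i
            · rw [Fin.snoc_last, Fin.snoc_last, hcast]
              exact ⟨by linarith, hBKS s hs⟩
            · rw [Fin.snoc_castSucc, Fin.snoc_castSucc, hcast]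
              exact ⟨(hb i).1.trans (by linarith), (hb i).2⟩
          · rw [SemidirectProduct.mul_left, Fin.prod_univ_castSucc]
            simp only [Fin.snoc_castSucc, Fin.snoc_last]
            rw [← hleft]
            congr 1
  -- the ℤ[T,T⁻¹]-module generated by the `K`-components of `S`
  set β : Type _ := {b : K // b ∈ BK} with hβdef
  set K₀ : Submodule RL (AK φ) := Submodule.span RL (Set.range fun b : β => ofK φ (b : K))
    with hK₀def
  haveI : IsNoetherian RL K₀ :=
    isNoetherian_of_fg_of_noetherian _ (Submodule.fg_span (Set.finite_range _))
  obtain ⟨N, hN1, hNper⟩ := exists_uniform_period (M := K₀) (fun n => T (n : ℤ))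
    (fun m n hm h => T_sub_one_dvd h)
  set p : RL := T (N : ℤ) - 1 with hpdef
  obtain ⟨m₀, hm₀1, hm₀⟩ := exists_fitting_exponent (M := K₀) p
  set Q : Submodule RL K₀ := LinearMap.range (LinearMap.lsmul RL K₀ (p ^ m₀)) with hQdef
  set q : K₀ →ₗ[RL] K₀ ⧸ Q := Q.mkQ with hqdef
  -- `p ^ m₀` kills the quotient
  have hqW : ∀ w : K₀ ⧸ Q, p ^ m₀ • w = 0 := by
    intro w
    obtain ⟨y, rfl⟩ := Submodule.Quotient.mk_surjective Q w
    have : (Submodule.Quotient.mk (p ^ m₀ • y) : K₀ ⧸ Q) = 0 :=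
      (Submodule.Quotient.mk_eq_zero Q).2 ⟨y, by simp⟩
    rwa [Submodule.Quotient.mk_smul] at this
  set p' : RL := T (-(N : ℤ)) - 1 with hp'def
  have hTNN : (T (-(N : ℤ)) : RL) * T (N : ℤ) = 1 := by
    rw [← T_add]; simp
  have hfac : p' = (-(T (-(N : ℤ)) : RL)) * p := by
    rw [hp'def, hpdef, neg_mul, mul_sub, mul_one, hTNN]
    ring
  have hp'W : ∀ w : K₀ ⧸ Q, p' ^ m₀ • w = 0 := by
    intro w
    rw [hfac, mul_pow, mul_smul, hqW, smul_zero]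
  -- `q` is injective on `ker p`
  have hinj : ∀ x y : K₀, p • x = 0 → p • y = 0 → q x = q y → x = y := by
    intro x y hx hy hqeq
    have h0 : q (x - y) = 0 := by rw [map_sub, hqeq, sub_self]
    have h0' : x - y ∈ Q := (Submodule.Quotient.mk_eq_zero Q).1 h0
    obtain ⟨z, hz⟩ := h0'
    have hz' : p ^ m₀ • z = x - y := hz
    have hpxy : p ^ m₀ • (x - y) = 0 := by
      have hsplit : p ^ m₀ = p ^ (m₀ - 1) * p := by
        conv_lhs => rw [show m₀ = (m₀ - 1) + 1 by omega]
        rw [pow_succ]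
      rw [hsplit, mul_smul, smul_sub, hx, hy, sub_self, smul_zero]
    have h2 : p ^ (2 * m₀) • z = 0 := by
      rw [two_mul, pow_add, mul_smul, hz', hpxy]
    have h3 : p ^ m₀ • z = 0 := hm₀ z h2
    have : x - y = 0 := by rw [← hz', h3]
    exact sub_eq_zero.1 this
  -- membership in `K₀`
  have hbmem : ∀ b : β, ofK φ (b : K) ∈ K₀ := fun b => Submodule.subset_span ⟨b, rfl⟩
  -- generators of the counting set
  set ι : Type _ := Bool × Fin m₀ × Fin N × β with hιdef
  set v : β → K₀ ⧸ Q := fun b => q ⟨ofK φ (b : K), hbmem b⟩ with hvdef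
  set gens : ι → K₀ ⧸ Q := gensOf p p' (fun n : ℕ => (T (n : ℤ) : RL)) m₀ N v with hgensdef
  -- the single-term estimate
  have hsingle : ∀ (E : ℕ) (e : ℤ), |e| ≤ (E : ℤ) → ∀ b : β,
      (T e : RL) • q ⟨ofK φ (b : K), hbmem b⟩ ∈ bddSum gens ((E + 2) ^ m₀) := by
    intro E e he b
    set y : K₀ ⧸ Q := v b with hydef
    have hN0 : (0 : ℤ) < (N : ℤ) := by exact_mod_cast hN1
    set sm : ℤ := e % (N : ℤ) with hsmdef
    set kq : ℤ := e / (N : ℤ) with hkqdef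
    have hs0 : 0 ≤ sm := Int.emod_nonneg e (ne_of_gt hN0)
    have hsN : sm < (N : ℤ) := Int.emod_lt_of_pos e hN0
    have hkqabs : |kq| ≤ (E : ℤ) := le_trans (Int.abs_ediv_le_abs e (N : ℤ)) he
    have he' : e = (N : ℤ) * kq + sm := (Int.mul_ediv_add_emod e (N : ℤ)).symm
    have hsmN : sm.toNat < N := by omega
    set sfin : Fin N := ⟨sm.toNat, hsmN⟩ with hsfindef
    have hTs : ((sfin : ℕ) : ℤ) = sm := by
      simp [hsfindef, Int.toNat_of_nonneg hs0]
    have hsplit : (T e : RL) • y = (T ((N : ℤ) * kq) : RL) • ((T sm : RL) • y) := by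
      rw [← mul_smul, ← T_add, ← he']
    have hcoeff : ∀ (k : ℕ), (k : ℤ) ≤ (E : ℤ) → ∀ i : Fin m₀,
        |((k.choose (i : ℕ) : ℕ) : ℤ)| ≤ (((E + 2) ^ m₀ : ℕ) : ℤ) := by
      intro k hk i
      rw [abs_of_nonneg (Int.ofNat_nonneg _)]
      have h1 : k.choose (i : ℕ) ≤ k ^ (i : ℕ) := Nat.choose_le_pow _ _
      have hk' : k ≤ E := by exact_mod_cast hk
      have h2 : k ^ (i : ℕ) ≤ (E + 2) ^ (i : ℕ) :=
        Nat.pow_le_pow_left (by omega) _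
      have h3 : (E + 2) ^ (i : ℕ) ≤ (E + 2) ^ m₀ :=
        Nat.pow_le_pow_right (by omega) (le_of_lt i.2)
      exact_mod_cast (h1.trans h2).trans h3
    rcases le_or_gt 0 kq with hk | hk
    · -- nonnegative power of T N
      set k : ℕ := kq.toNat with hkdef
      have hkE : (k : ℤ) ≤ (E : ℤ) := by
        rw [hkdef, Int.toNat_of_nonneg hk]
        calc kq ≤ |kq| := le_abs_self _
          _ ≤ (E : ℤ) := hkqabs
      have hTk : (T ((N : ℤ) * kq) : RL) = (1 + p) ^ k := by
        have h1 : (1 + p : RL) = T (N : ℤ) := by rw [hpdef]; ring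
        rw [h1, T_pow]
        congr 1
        rw [hkdef, Int.toNat_of_nonneg hk]
        ring
      rw [hsplit, hTk, binom_smul p m₀ hm₀1 hqW k ((T sm : RL) • y),
        ← Fin.sum_univ_eq_sum_range]
      have hterm : ∀ i : Fin m₀, ((k.choose (i : ℕ) : ℤ)) • (p ^ (i : ℕ) • ((T sm : RL) • y))
          = ((k.choose (i : ℕ) : ℤ)) • gens (true, i, sfin, b) := by
        intro i
        congr 1
        rw [hgensdef]
        simp only [gensOf, Bool.cond_true, hTs, mul_smul, hydef]
      rw [Finset.sum_congr rfl fun i _ => hterm i]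
      exact subsum_mem_bddSum (fun i : Fin m₀ => (true, i, sfin, b))
        (fun i j hij => by simpa using congrArg (fun z : ι => z.2.1) hij)
        (fun i => (k.choose (i : ℕ) : ℤ)) (fun i => hcoeff k hkE i)
    · -- negative power of T N
      set k : ℕ := (-kq).toNat with hkdef
      have hkE : (k : ℤ) ≤ (E : ℤ) := by
        rw [hkdef, Int.toNat_of_nonneg (by omega)]
        calc -kq ≤ |kq| := neg_le_abs _
          _ ≤ (E : ℤ) := hkqabs
      have hTk : (T ((N : ℤ) * kq) : RL) = (1 + p') ^ k := by
        have h1 : (1 + p' : RL) = T (-(N : ℤ)) := by rw [hp'def]; ring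
        rw [h1, T_pow]
        congr 1
        rw [hkdef, Int.toNat_of_nonneg (by omega : (0:ℤ) ≤ -kq)]
        ring
      rw [hsplit, hTk, binom_smul p' m₀ hm₀1 hp'W k ((T sm : RL) • y),
        ← Fin.sum_univ_eq_sum_range]
      have hterm : ∀ i : Fin m₀, ((k.choose (i : ℕ) : ℤ)) • (p' ^ (i : ℕ) • ((T sm : RL) • y))
          = ((k.choose (i : ℕ) : ℤ)) • gens (false, i, sfin, b) := by
        intro i
        congr 1
        rw [hgensdef]
        simp only [gensOf, Bool.cond_false, hTs, mul_smul, hydef]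
      rw [Finset.sum_congr rfl fun i _ => hterm i]
      exact subsum_mem_bddSum (fun i : Fin m₀ => (false, i, sfin, b))
        (fun i j hij => by simpa using congrArg (fun z : ι => z.2.1) hij)
        (fun i => (k.choose (i : ℕ) : ℤ)) (fun i => hcoeff k hkE i)
  -- choice of constants
  refine ⟨(3 * (Mb + 2) ^ m₀) ^ Fintype.card ι, (m₀ + 1) * Fintype.card ι, fun r hr => ?_⟩
  set c_r : ℕ := r * (Mb * r + 2) ^ m₀ with hcrdef
  set f : (K ⋊[zpowersHom (MulAut K) φ] Multiplicative ℤ) → K₀ ⧸ Q := fun x =>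
    if h : ofK φ x.left ∈ K₀ then q ⟨ofK φ x.left, h⟩ else 0 with hfdef
  have hmaps : ∀ x ∈ ((Subgroup.map SemidirectProduct.inl (periodicPts φ) :
      Subgroup (K ⋊[zpowersHom (MulAut K) φ] Multiplicative ℤ)) : Set _) ∩ S ^ r,
      f x ∈ bddSum gens c_r := by
    intro x hx
    obtain ⟨hxP, hxS⟩ := hx
    rw [SetLike.mem_coe, Subgroup.mem_map] at hxP
    obtain ⟨a, haP, rfl⟩ := hxP
    obtain ⟨-, e, b, hb, hleft⟩ := hdec r _ hxS
    rw [SemidirectProduct.left_inl] at hleft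
    have hsum : ofK φ a = ∑ i, (T (e i) : RL) • ofK φ (b i) := by
      rw [hleft, ofK_prod]
      exact Finset.sum_congr rfl fun i _ => (T_smul_ofK φ (e i) (b i)).symm
    have hbK : ∀ i, ofK φ (b i) ∈ K₀ := fun i => Submodule.subset_span ⟨⟨b i, (hb i).2⟩, rfl⟩
    have haK : ofK φ a ∈ K₀ := by
      rw [hsum]; exact Submodule.sum_mem _ fun i _ => Submodule.smul_mem _ _ (hbK i)
    have hxi : (⟨ofK φ a, haK⟩ : K₀) = ∑ i, (T (e i) : RL) • (⟨ofK φ (b i), hbK i⟩ : K₀) := by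
      apply Subtype.ext
      rw [Submodule.coe_sum]
      simpa using hsum
    have hfx : f (SemidirectProduct.inl a) = q ⟨ofK φ a, haK⟩ := by
      rw [hfdef]
      simp only [SemidirectProduct.left_inl]
      exact dif_pos haK
    rw [hfx, hxi, map_sum]
    have hterm : ∀ i : Fin r,
        q ((T (e i) : RL) • (⟨ofK φ (b i), hbK i⟩ : K₀)) ∈ bddSum gens ((Mb * r + 2) ^ m₀) := by
      intro i
      rw [map_smul]
      have hbound : |e i| ≤ ((Mb * r : ℕ) : ℤ) := by
        have := (hb i).1
        push_cast
        exact_mod_cast this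
      exact hsingle (Mb * r) (e i) hbound ⟨b i, (hb i).2⟩
    have := sum_mem_bddSum hterm
    rwa [hcrdef]
  have hinjOn : Set.InjOn f (((Subgroup.map SemidirectProduct.inl (periodicPts φ) :
      Subgroup (K ⋊[zpowersHom (MulAut K) φ] Multiplicative ℤ)) : Set _) ∩ S ^ r) := by
    have hkill : ∀ (c : K) (hc : ofK φ c ∈ K₀), c ∈ periodicPts φ →
        p • (⟨ofK φ c, hc⟩ : K₀) = 0 := by
      intro c hc hcP
      obtain ⟨n, hn1, hfix⟩ := hcP
      have h1 : (T ((n : ℕ) : ℤ) : RL) • ofK φ c = ofK φ c := by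
        rw [T_smul_ofK, zpow_natCast, hfix]
      have h2 : ((T ((n : ℕ) : ℤ) - 1 : RL)) • (⟨ofK φ c, hc⟩ : K₀) = 0 := by
        apply Subtype.ext
        have hcoe : (((T ((n : ℕ) : ℤ) - 1 : RL) • (⟨ofK φ c, hc⟩ : K₀) : K₀) : AK φ)
            = (T ((n : ℕ) : ℤ) - 1 : RL) • ofK φ c := rfl
        rw [hcoe, sub_smul, one_smul, h1, sub_self]
        rfl
      have := hNper n hn1 ⟨ofK φ c, hc⟩ h2
      rwa [hpdef]
    intro x hx y hy hfe
    obtain ⟨hxP, hxS⟩ := hx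
    obtain ⟨hyP, hyS⟩ := hy
    rw [SetLike.mem_coe, Subgroup.mem_map] at hxP hyP
    obtain ⟨a, haP, rfl⟩ := hxP
    obtain ⟨a', haP', rfl⟩ := hyP
    obtain ⟨-, e, b, hb, hleft⟩ := hdec r _ hxS
    obtain ⟨-, e', b', hb', hleft'⟩ := hdec r _ hyS
    rw [SemidirectProduct.left_inl] at hleft hleft'
    have haK : ofK φ a ∈ K₀ := by
      rw [hleft, ofK_prod]
      refine Submodule.sum_mem _ fun i _ => ?_
      rw [← T_smul_ofK]
      exact Submodule.smul_mem _ _ (Submodule.subset_span ⟨⟨b i, (hb i).2⟩, rfl⟩)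
    have haK' : ofK φ a' ∈ K₀ := by
      rw [hleft', ofK_prod]
      refine Submodule.sum_mem _ fun i _ => ?_
      rw [← T_smul_ofK]
      exact Submodule.smul_mem _ _ (Submodule.subset_span ⟨⟨b' i, (hb' i).2⟩, rfl⟩)
    have hfx : f (SemidirectProduct.inl a) = q ⟨ofK φ a, haK⟩ := by
      rw [hfdef]
      simp only [SemidirectProduct.left_inl]
      exact dif_pos haK
    have hfy : f (SemidirectProduct.inl a') = q ⟨ofK φ a', haK'⟩ := by
      rw [hfdef]
      simp only [SemidirectProduct.left_inl]
      exact dif_pos haK'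
    have heq := hinj ⟨ofK φ a, haK⟩ ⟨ofK φ a', haK'⟩ (hkill a haK haP) (hkill a' haK' haP')
      (by rw [← hfx, ← hfy]; exact hfe)
    have : a = a' := ofK_injective φ (congrArg Subtype.val heq)
    rw [this]
  have hcount := Set.ncard_le_ncard_of_injOn f hmaps hinjOn (bddSum_finite gens c_r)
  refine hcount.trans ((ncard_bddSum_le gens c_r).trans ?_)
  -- arithmetic
  have hbase : 2 * c_r + 1 ≤ 3 * (Mb + 2) ^ m₀ * r ^ (m₀ + 1) := by
    have h1 : Mb * r + 2 ≤ (Mb + 2) * r := by nlinarith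
    have h2 : (Mb * r + 2) ^ m₀ ≤ (Mb + 2) ^ m₀ * r ^ m₀ := by
      rw [← mul_pow]
      exact Nat.pow_le_pow_left h1 m₀
    have h3 : c_r ≤ (Mb + 2) ^ m₀ * r ^ (m₀ + 1) := by
      rw [hcrdef]
      calc r * (Mb * r + 2) ^ m₀ ≤ r * ((Mb + 2) ^ m₀ * r ^ m₀) :=
            Nat.mul_le_mul_left r h2
        _ = (Mb + 2) ^ m₀ * r ^ (m₀ + 1) := by ring
    have h4 : 1 ≤ (Mb + 2) ^ m₀ * r ^ (m₀ + 1) :=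
      Nat.mul_pos (Nat.pow_pos (by omega)) (Nat.pow_pos hr)
    calc 2 * c_r + 1 ≤ 2 * ((Mb + 2) ^ m₀ * r ^ (m₀ + 1))
          + 1 * ((Mb + 2) ^ m₀ * r ^ (m₀ + 1)) :=
        add_le_add (Nat.mul_le_mul_left 2 h3) (by simpa using h4)
      _ = 3 * (Mb + 2) ^ m₀ * r ^ (m₀ + 1) := by ring
  calc (2 * c_r + 1) ^ Fintype.card ι
      ≤ (3 * (Mb + 2) ^ m₀ * r ^ (m₀ + 1)) ^ Fintype.card ι :=
        Nat.pow_le_pow_left hbase _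
    _ = (3 * (Mb + 2) ^ m₀) ^ Fintype.card ι * r ^ ((m₀ + 1) * Fintype.card ι) := by
        rw [mul_pow, ← pow_mul]
end

section
/- Let k ≥ 2 be an integer and let a and b be positive integers such that b/a is not an integer power of k, i.e. b ≠ kⁱ·a in ℚ for every i ∈ ℤ. Then the set {n ∈ ℕ : there exists j ∈ ℕ with j < n such that (kⁿ − 1) divides (kʲ·a − b) in ℤ} is finite. -/
/-- Helper bound: if `x ≤ c` and `t + c + 2 ≤ n` then `k^t * x < k^n - 1`. -/
lemma aux_pow_mul_lt (k : ℤ) (hk : 2 ≤ k) (c t n : ℕ) (x : ℤ) (hx : 0 < x) (hxc : x ≤ (c : ℤ))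
    (h : t + c + 2 ≤ n) : k ^ t * x < k ^ n - 1 := by
  have hk0 : (0:ℤ) < k := by linarith
  have hk1 : (1:ℤ) ≤ k := by linarith
  have hc2 : (c:ℤ) < 2 ^ (c+1) := by
    exact_mod_cast Nat.lt_of_lt_of_le (Nat.lt_two_pow_self (n := c)) (Nat.pow_le_pow_right (by norm_num) (Nat.le_succ c))
  have hck : (c:ℤ) < k ^ (c+1) :=
    lt_of_lt_of_le hc2 (pow_le_pow_left₀ (by norm_num) hk _)
  have h1 : k ^ t * x < k ^ (t + c + 1) := by
    calc k ^ t * x ≤ k ^ t * c := by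
          exact mul_le_mul_of_nonneg_left hxc (pow_pos hk0 t).le
      _ < k ^ t * k ^ (c+1) := by
          exact mul_lt_mul_of_pos_left hck (pow_pos hk0 t)
      _ = k ^ (t + c + 1) := by rw [← pow_add]; ring_nf
  have h2 : k ^ (t + c + 1) ≤ k ^ (n - 1) := pow_le_pow_right₀ hk1 (by omega)
  have h3 : k ^ (n - 1) ≤ k ^ n - 1 := by
    have hp : (1:ℤ) ≤ k ^ (n-1) := one_le_pow₀ hk1
    have he : k ^ n = k ^ (n-1) * k := by
      rw [← pow_succ]; congr 1; omega
    nlinarith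
  linarith

/-- Let `k ≥ 2` and let `a, b` be positive integers such that `b/a` is not an
integer power of `k` (i.e. `b ≠ kⁱ·a` in `ℚ` for every `i ∈ ℤ`). Then there are only finitely
many `n` for which there exists `j < n` with `(kⁿ - 1) ∣ (kʲ·a - b)` in `ℤ`. -/
theorem finitely_many_n_with_power_congruence
    (k : ℤ) (hk : 2 ≤ k) (a b : ℤ) (ha : 0 < a) (hb : 0 < b)
    (hq : ∀ i : ℤ, (b : ℚ) ≠ (k : ℚ) ^ i * (a : ℚ)) :
    {n : ℕ | ∃ j : ℕ, j < n ∧ (k ^ n - 1) ∣ (k ^ j * a - b)}.Finite := by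
  have hk0 : (0:ℤ) < k := by linarith
  have hkQ : (k:ℚ) ≠ 0 := by positivity
  set c : ℕ := (a + b).toNat with hc
  have hac : a ≤ (c:ℤ) := by rw [hc]; omega
  have hbc : b ≤ (c:ℤ) := by rw [hc]; omega
  apply Set.Finite.subset (Set.finite_Iio (2*c+4))
  intro n hn
  obtain ⟨j, hjn, hdvd⟩ := hn
  by_contra hge
  simp only [Set.mem_Iio, not_lt] at hge
  by_cases hcase : 2*j ≤ n
  · -- j small: force b = k^j * a
    have hub : k ^ j * a < k ^ n - 1 := aux_pow_mul_lt k hk c j n a ha hac (by omega)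
    have hlb : b < k ^ n - 1 := by
      have := aux_pow_mul_lt k hk c 0 n b hb hbc (by omega)
      simpa using this
    have habs : |k ^ j * a - b| < k ^ n - 1 := by
      rw [abs_lt]
      constructor
      · have : 0 < k ^ j * a := mul_pos (pow_pos hk0 j) ha
        linarith
      · linarith
    have hzero : k ^ j * a - b = 0 := Int.eq_zero_of_abs_lt_dvd hdvd habs
    have hbq : (b : ℚ) = (k : ℚ) ^ (j:ℤ) * (a : ℚ) := by
      have : b = k ^ j * a := by linarith
      rw [zpow_natCast]
      exact_mod_cast this
    exact hq j hbq
  · -- j large: force a = k^(n-j) * b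
    set m : ℕ := n - j with hm
    have hmj : m + j = n := by omega
    have h1 : (k ^ n - 1) ∣ k ^ m * (k ^ j * a - b) := hdvd.mul_left _
    have heq : k ^ m * (k ^ j * a - b) = (k ^ n - 1) * a + (a - k ^ m * b) := by
      rw [← hmj, pow_add]; ring
    rw [heq] at h1
    have h2 : (k ^ n - 1) ∣ (a - k ^ m * b) :=
      (dvd_add_right (dvd_mul_right _ _)).mp h1
    have hub : k ^ m * b < k ^ n - 1 := aux_pow_mul_lt k hk c m n b hb hbc (by omega)
    have hlb : a < k ^ n - 1 := by
      have := aux_pow_mul_lt k hk c 0 n a ha hac (by omega)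
      simpa using this
    have habs : |a - k ^ m * b| < k ^ n - 1 := by
      rw [abs_lt]
      constructor
      · linarith
      · have : 0 < k ^ m * b := mul_pos (pow_pos hk0 m) hb
        linarith
    have hzero : a - k ^ m * b = 0 := Int.eq_zero_of_abs_lt_dvd h2 habs
    have haq : (a : ℚ) = (k : ℚ) ^ m * (b : ℚ) := by
      have : a = k ^ m * b := by linarith
      exact_mod_cast this
    have hbq : (b : ℚ) = (k : ℚ) ^ (-(m:ℤ)) * (a : ℚ) := by
      rw [zpow_neg, zpow_natCast, haq]
      field_simp
    exact hq (-(m:ℤ)) hbq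
end
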